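/- arXiv:2112.14162 — 9 statements merged into one kernel-verified Lean document; each statement's English description precedes it below -/
import Mathlib

section
/- Let f ∈ C²([a,b]) with m₂ ≤ f''(x) ≤ M₂ for all x ∈ [a,b], and n ≥ 1. Define ε = [f(b) - f(a)]/(b-a) - [ (f'(a)+f'(b))/(2n) + (1/n)∑_{k=1}^{n-1} f'(a + k(b-a)/n) ]. Then |ε| ≤ (b-a)(M₂ - m₂)/(8n). -/
open Set

lemma lipA (a b M₂ : ℝ) (f' f'' : ℝ → ℝ)
    (hf'' : ∀ x ∈ Set.Icc a b, HasDerivWithinAt f' (f'' x) (Set.Icc a b) x)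
    (hM : ∀ x ∈ Set.Icc a b, f'' x ≤ M₂) :
    ∀ x ∈ Set.Icc a b, ∀ y ∈ Set.Icc a b, x ≤ y → f' y - f' x ≤ M₂ * (y - x) := by
  have hmono : MonotoneOn (fun x => M₂ * x - f' x) (Set.Icc a b) := by
    apply monotoneOn_of_hasDerivWithinAt_nonneg (convex_Icc a b)
      (f' := fun x => M₂ - f'' x)
    · exact (continuous_const.mul continuous_id).continuousOn.sub
        (fun x hx => (hf'' x hx).continuousWithinAt)
    · intro x hx
      have h1 : HasDerivWithinAt (fun x => M₂ * x) (M₂ * 1) (interior (Set.Icc a b)) x :=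
        ((hasDerivAt_id x).const_mul M₂).hasDerivWithinAt
      have h2 := ((hf'' x (interior_subset hx)).mono interior_subset)
      simpa using h1.fun_sub h2
    · intro x hx
      have := hM x (interior_subset hx)
      linarith
  intro x hx y hy hxy
  have := hmono hx hy hxy
  simp only at this
  linarith

lemma fwd (a b M₂ : ℝ) (f f' f'' : ℝ → ℝ)
    (hf' : ∀ x ∈ Set.Icc a b, HasDerivWithinAt f (f' x) (Set.Icc a b) x)
    (hf'' : ∀ x ∈ Set.Icc a b, HasDerivWithinAt f' (f'' x) (Set.Icc a b) x)
    (hM : ∀ x ∈ Set.Icc a b, f'' x ≤ M₂)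
    {u v : ℝ} (hu : u ∈ Set.Icc a b) (hv : v ∈ Set.Icc a b) (huv : u ≤ v) :
    f v - f u - (v - u) * f' u ≤ M₂ * (v - u) ^ 2 / 2 := by
  have hA := lipA a b M₂ f' f'' hf'' hM
  have hsub : Set.Icc u b ⊆ Set.Icc a b := Set.Icc_subset_Icc_left hu.1
  have hmono : MonotoneOn (fun x => M₂ * (x - u) ^ 2 / 2 - f x + x * f' u) (Set.Icc u b) := by
    apply monotoneOn_of_hasDerivWithinAt_nonneg (convex_Icc u b)
      (f' := fun x => M₂ * (x - u) - f' x + f' u)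
    · exact (((continuous_const.mul ((continuous_id.sub continuous_const).pow 2)).div_const
        2).continuousOn.sub (fun x hx => ((hf' x (hsub hx)).mono hsub).continuousWithinAt)).add
        (continuous_id.mul continuous_const).continuousOn
    · intro x hx
      rw [interior_Icc] at hx
      have hxab : x ∈ Set.Icc a b := hsub (Set.Ioo_subset_Icc_self hx)
      have h1 : HasDerivAt (fun x => M₂ * (x - u) ^ 2 / 2)
          (M₂ * (2 * (x - u) ^ 1 * 1) / 2) x :=
        ((((hasDerivAt_id x).sub_const u).pow 2).const_mul M₂).div_const 2
      have h2 : HasDerivWithinAt f (f' x) (interior (Set.Icc u b)) x := by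
        rw [interior_Icc]; exact (hf' x hxab).mono (Set.Ioo_subset_Icc_self.trans hsub)
      have h3 : HasDerivAt (fun x => x * f' u) (1 * f' u) x :=
        (hasDerivAt_id x).mul_const (f' u)
      have := (h1.hasDerivWithinAt.fun_sub h2).fun_add h3.hasDerivWithinAt
      refine this.congr_deriv ?_
      ring
    · intro x hx
      rw [interior_Icc] at hx
      have hxab : x ∈ Set.Icc a b := hsub (Set.Ioo_subset_Icc_self hx)
      have := hA u hu x hxab hx.1.le
      linarith
  have huI : u ∈ Set.Icc u b := ⟨le_refl u, hu.2⟩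
  have hvI : v ∈ Set.Icc u b := ⟨huv, hv.2⟩
  have := hmono huI hvI huv
  simp only at this
  nlinarith [this]

lemma bwd (a b M₂ : ℝ) (f f' f'' : ℝ → ℝ)
    (hf' : ∀ x ∈ Set.Icc a b, HasDerivWithinAt f (f' x) (Set.Icc a b) x)
    (hf'' : ∀ x ∈ Set.Icc a b, HasDerivWithinAt f' (f'' x) (Set.Icc a b) x)
    (hM : ∀ x ∈ Set.Icc a b, f'' x ≤ M₂)
    {u v : ℝ} (hu : u ∈ Set.Icc a b) (hv : v ∈ Set.Icc a b) (huv : u ≤ v) :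
    f u - f v + (v - u) * f' v ≤ M₂ * (v - u) ^ 2 / 2 := by
  have hA := lipA a b M₂ f' f'' hf'' hM
  have hsub : Set.Icc a v ⊆ Set.Icc a b := Set.Icc_subset_Icc_right hv.2
  have hmono : MonotoneOn (fun x => f x - x * f' v - M₂ * (v - x) ^ 2 / 2) (Set.Icc a v) := by
    apply monotoneOn_of_hasDerivWithinAt_nonneg (convex_Icc a v)
      (f' := fun x => f' x - f' v + M₂ * (v - x))
    · have hfc : ContinuousOn f (Set.Icc a v) :=
        fun x hx => ((hf' x (hsub hx)).mono hsub).continuousWithinAt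
      exact (hfc.sub (continuous_id.mul continuous_const).continuousOn).sub
        ((continuous_const.mul ((continuous_const.sub continuous_id).pow 2)).div_const
          2).continuousOn
    · intro x hx
      rw [interior_Icc] at hx
      have hxab : x ∈ Set.Icc a b := hsub (Set.Ioo_subset_Icc_self hx)
      have h1 : HasDerivWithinAt f (f' x) (interior (Set.Icc a v)) x := by
        rw [interior_Icc]; exact (hf' x hxab).mono (Set.Ioo_subset_Icc_self.trans hsub)
      have h2 : HasDerivAt (fun x => x * f' v) (1 * f' v) x :=
        (hasDerivAt_id x).mul_const (f' v)
      have h3 : HasDerivAt (fun x => M₂ * (v - x) ^ 2 / 2)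
          (M₂ * (2 * (v - x) ^ 1 * (0 - 1)) / 2) x :=
        ((((hasDerivAt_const x v).sub (hasDerivAt_id x)).pow 2).const_mul M₂).div_const 2
      have := (h1.fun_sub h2.hasDerivWithinAt).fun_sub h3.hasDerivWithinAt
      refine this.congr_deriv ?_
      ring
    · intro x hx
      rw [interior_Icc] at hx
      have hxab : x ∈ Set.Icc a b := hsub (Set.Ioo_subset_Icc_self hx)
      have := hA x hxab v hv hx.2.le
      linarith
  have huI : u ∈ Set.Icc a v := ⟨hu.1, huv⟩
  have hvI : v ∈ Set.Icc a v := ⟨hv.1, le_refl v⟩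
  have := hmono huI hvI huv
  simp only at this
  nlinarith [this]

lemma trap (a b m₂ M₂ : ℝ) (f f' f'' : ℝ → ℝ)
    (hf' : ∀ x ∈ Set.Icc a b, HasDerivWithinAt f (f' x) (Set.Icc a b) x)
    (hf'' : ∀ x ∈ Set.Icc a b, HasDerivWithinAt f' (f'' x) (Set.Icc a b) x)
    (hm : ∀ x ∈ Set.Icc a b, m₂ ≤ f'' x)
    (hM : ∀ x ∈ Set.Icc a b, f'' x ≤ M₂)
    {u v : ℝ} (hu : u ∈ Set.Icc a b) (hv : v ∈ Set.Icc a b) (huv : u ≤ v) :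
    |f v - f u - (v - u) * (f' u + f' v) / 2| ≤ (M₂ - m₂) * (v - u) ^ 2 / 8 := by
  set c := (u + v) / 2 with hc
  have hcmem : c ∈ Set.Icc a b := ⟨by rw [hc]; linarith [hu.1, hv.1], by rw [hc]; linarith [hu.2, hv.2]⟩
  have huc : u ≤ c := by rw [hc]; linarith
  have hcv : c ≤ v := by rw [hc]; linarith
  have hnf' : ∀ x ∈ Set.Icc a b, HasDerivWithinAt (fun y => -f y) (-f' x) (Set.Icc a b) x :=
    fun x hx => (hf' x hx).neg
  have hnf'' : ∀ x ∈ Set.Icc a b, HasDerivWithinAt (fun y => -f' y) (-f'' x) (Set.Icc a b) x :=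
    fun x hx => (hf'' x hx).neg
  have hnM : ∀ x ∈ Set.Icc a b, -f'' x ≤ -m₂ := fun x hx => by linarith [hm x hx]
  have F1 := fwd a b M₂ f f' f'' hf' hf'' hM hu hcmem huc
  have F2 := fwd a b (-m₂) (fun y => -f y) (fun y => -f' y) (fun y => -f'' y)
    hnf' hnf'' hnM hu hcmem huc
  have B1 := bwd a b M₂ f f' f'' hf' hf'' hM hcmem hv hcv
  have B2 := bwd a b (-m₂) (fun y => -f y) (fun y => -f' y) (fun y => -f'' y)
    hnf' hnf'' hnM hcmem hv hcv
  have h1 : c - u = (v - u) / 2 := by rw [hc]; ring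
  have h2 : v - c = (v - u) / 2 := by rw [hc]; ring
  rw [h1] at F1 F2
  rw [h2] at B1 B2
  rw [abs_le]
  constructor <;> nlinarith [F1, F2, B1, B2]

theorem new_taylor_like_remainder_bound
    (a b m₂ M₂ : ℝ) (f f' f'' : ℝ → ℝ) (hab : a < b) (n : ℕ) (hn : 1 ≤ n)
    (hf' : ∀ x ∈ Set.Icc a b, HasDerivWithinAt f (f' x) (Set.Icc a b) x)
    (hf'' : ∀ x ∈ Set.Icc a b, HasDerivWithinAt f' (f'' x) (Set.Icc a b) x)
    (hcont : ContinuousOn f'' (Set.Icc a b))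
    (hm : ∀ x ∈ Set.Icc a b, m₂ ≤ f'' x)
    (hM : ∀ x ∈ Set.Icc a b, f'' x ≤ M₂) :
    |(f b - f a) / (b - a)
      - ((f' a + f' b) / (2 * n)
        + (1 / n) * ∑ k ∈ Finset.Ioo 0 n, f' (a + k * (b - a) / n))|
      ≤ (b - a) * (M₂ - m₂) / (8 * n) := by
  have hba : (0:ℝ) < b - a := by linarith
  have hn0 : (0:ℝ) < (n:ℝ) := by exact_mod_cast Nat.pos_of_ne_zero (by omega)
  set X : ℕ → ℝ := fun k => a + k * ((b - a) / n) with hXdef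
  have hX0 : X 0 = a := by simp [hXdef]
  have hXn : X n = b := by
    simp only [hXdef]
    field_simp
    ring
  have hstep : ∀ k : ℕ, X (k + 1) - X k = (b - a) / n := by
    intro k
    simp only [hXdef]
    push_cast
    ring
  have hXmem : ∀ k : ℕ, k ≤ n → X k ∈ Set.Icc a b := by
    intro k hk
    constructor
    · simp only [hXdef]
      have : (0:ℝ) ≤ (k:ℝ) * ((b - a) / n) :=
        mul_nonneg (Nat.cast_nonneg k) (by positivity)
      linarith
    · simp only [hXdef]
      have hkn : (k:ℝ) ≤ (n:ℝ) := by exact_mod_cast hk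
      have : (k:ℝ) * ((b - a) / n) ≤ (n:ℝ) * ((b - a) / n) :=
        mul_le_mul_of_nonneg_right hkn (by positivity)
      have h2 : (n:ℝ) * ((b - a) / n) = b - a := by field_simp
      linarith
  set E : ℕ → ℝ := fun k =>
    f (X (k + 1)) - f (X k) - (X (k + 1) - X k) * (f' (X k) + f' (X (k + 1))) / 2 with hEdef
  have hEbound : ∀ k ∈ Finset.range n, |E k| ≤ (M₂ - m₂) * ((b - a) / n) ^ 2 / 8 := by
    intro k hk
    rw [Finset.mem_range] at hk
    have h1 := trap a b m₂ M₂ f f' f'' hf' hf'' hm hM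
      (hXmem k hk.le) (hXmem (k + 1) hk) (by rw [← sub_nonneg, hstep]; positivity)
    rw [hstep] at h1
    simpa only [hEdef, hstep] using h1
  have habs : |∑ k ∈ Finset.range n, E k| ≤ (n:ℝ) * ((M₂ - m₂) * ((b - a) / n) ^ 2 / 8) := by
    refine (Finset.abs_sum_le_sum_abs _ _).trans ?_
    calc ∑ k ∈ Finset.range n, |E k| ≤ ∑ _k ∈ Finset.range n, (M₂ - m₂) * ((b - a) / n) ^ 2 / 8 :=
          Finset.sum_le_sum hEbound
      _ = (n:ℝ) * ((M₂ - m₂) * ((b - a) / n) ^ 2 / 8) := by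
          rw [Finset.sum_const, Finset.card_range, nsmul_eq_mul]
  have hsum1 : ∑ k ∈ Finset.range n, (f (X (k + 1)) - f (X k)) = f b - f a := by
    rw [Finset.sum_range_sub (fun k => f (X k)), hXn, hX0]
  have hsum2 : ∑ k ∈ Finset.range n, (f' (X k) + f' (X (k + 1)))
      = f' a + f' b + 2 * ∑ k ∈ Finset.Ioo 0 n, f' (X k) := by
    obtain ⟨m, rfl⟩ : ∃ m, n = m + 1 := ⟨n - 1, by omega⟩
    rw [Finset.sum_add_distrib, Finset.sum_range_succ' (fun k => f' (X k)) m,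
        Finset.sum_range_succ (fun k => f' (X (k + 1))) m]
    have hIoo : Finset.Ioo 0 (m + 1) = Finset.Ico 1 (m + 1) := by
      ext x; simp; omega
    rw [hIoo, Finset.sum_Ico_eq_sum_range]
    have h1 : ∀ i : ℕ, X (1 + i) = X (i + 1) := fun i => by rw [add_comm]
    simp only [Nat.add_sub_cancel, h1, hX0, hXn]
    ring
  have hsumE : ∑ k ∈ Finset.range n, E k
      = f b - f a - ((b - a) / n) * ((f' a + f' b) / 2 + ∑ k ∈ Finset.Ioo 0 n, f' (X k)) := by
    simp only [hEdef, hstep]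
    rw [show (fun k => f (X (k + 1)) - f (X k) - (b - a) / n * (f' (X k) + f' (X (k + 1))) / 2)
        = (fun k => (f (X (k + 1)) - f (X k)) - ((b - a) / n / 2) * (f' (X k) + f' (X (k + 1))))
        from funext fun k => by ring]
    rw [Finset.sum_sub_distrib, hsum1, ← Finset.mul_sum, hsum2]
    ring
  have hgs : ∑ k ∈ Finset.Ioo 0 n, f' (a + k * (b - a) / n) = ∑ k ∈ Finset.Ioo 0 n, f' (X k) :=
    Finset.sum_congr rfl (fun k _ => by rw [hXdef]; ring_nf)
  have hrw : (f b - f a) / (b - a)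
      - ((f' a + f' b) / (2 * n) + (1 / n) * ∑ k ∈ Finset.Ioo 0 n, f' (a + k * (b - a) / n))
      = (∑ k ∈ Finset.range n, E k) / (b - a) := by
    rw [hgs, hsumE]
    field_simp
  rw [hrw, abs_div, abs_of_pos hba, div_le_iff₀ hba]
  have heq : (n:ℝ) * ((M₂ - m₂) * ((b - a) / n) ^ 2 / 8) = (b - a) * (M₂ - m₂) / (8 * n) * (b - a) := by
    field_simp
  linarith [habs, heq.ge]
end

section
/- Let f ∈ C²([a,b]) with m₂ ≤ f'' ≤ M₂ on [a,b]. Then |f(b) - f(a) - (b-a)(f'(a)+f'(b))/2| ≤ (b-a)²(M₂-m₂)/8. -/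
open intervalIntegral Set MeasureTheory

theorem taylor_like_two_points
    (a b m₂ M₂ : ℝ) (f f' f'' : ℝ → ℝ) (hab : a < b)
    (hf' : ∀ x ∈ Set.Icc a b, HasDerivWithinAt f (f' x) (Set.Icc a b) x)
    (hf'' : ∀ x ∈ Set.Icc a b, HasDerivWithinAt f' (f'' x) (Set.Icc a b) x)
    (hcont : ContinuousOn f'' (Set.Icc a b))
    (hm : ∀ x ∈ Set.Icc a b, m₂ ≤ f'' x)
    (hM : ∀ x ∈ Set.Icc a b, f'' x ≤ M₂) :
    |f b - f a - (b - a) * ((f' a + f' b) / 2)| ≤ (b - a) ^ 2 * (M₂ - m₂) / 8 := by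
  set m : ℝ := (a + b) / 2 with hm_def
  set c : ℝ := (m₂ + M₂) / 2 with hc_def
  set K : ℝ := (M₂ - m₂) / 2 with hK_def
  have ham : a ≤ m := by rw [hm_def]; linarith
  have hmb : m ≤ b := by rw [hm_def]; linarith
  have hsub1 : Icc a m ⊆ Icc a b := Icc_subset_Icc le_rfl hmb
  have hsub2 : Icc m b ⊆ Icc a b := Icc_subset_Icc ham le_rfl
  have hfc : ContinuousOn f (Icc a b) := fun x hx => (hf' x hx).continuousWithinAt
  have hf'c : ContinuousOn f' (Icc a b) := fun x hx => (hf'' x hx).continuousWithinAt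
  set F : ℝ → ℝ := fun t => (t - m) * (f'' t - c) with hF_def
  have hFc : ContinuousOn F (Icc a b) :=
    (continuousOn_id.sub continuousOn_const).mul (hcont.sub continuousOn_const)
  have hFint : IntervalIntegrable F volume a b := by
    apply ContinuousOn.intervalIntegrable
    rwa [uIcc_of_le hab.le]
  have hFint1 : IntervalIntegrable F volume a m := by
    apply ContinuousOn.intervalIntegrable
    apply hFc.mono
    rw [uIcc_of_le ham]; exact hsub1
  have hFint2 : IntervalIntegrable F volume m b := by
    apply ContinuousOn.intervalIntegrable
    apply hFc.mono
    rw [uIcc_of_le hmb]; exact hsub2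
  set G : ℝ → ℝ := fun t => (t - m) * f' t - f t - c * (t - m) ^ 2 / 2 with hG_def
  have hGc : ContinuousOn G (Icc a b) := by
    apply ContinuousOn.sub
    · exact ((continuousOn_id.sub continuousOn_const).mul hf'c).sub hfc
    · exact (continuousOn_const.mul ((continuousOn_id.sub continuousOn_const).pow 2)).div_const 2
  have hderiv : ∀ x ∈ Ioo a b, HasDerivWithinAt G (F x) (Ioi x) x := by
    intro x hx
    have hxI : Icc a b ∈ nhds x := Icc_mem_nhds hx.1 hx.2
    have h1 : HasDerivAt f (f' x) x := (hf' x (Ioo_subset_Icc_self hx)).hasDerivAt hxI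
    have h2 : HasDerivAt f' (f'' x) x := (hf'' x (Ioo_subset_Icc_self hx)).hasDerivAt hxI
    have h3 : HasDerivAt (fun t => (t - m) * f' t) (1 * f' x + (x - m) * f'' x) x :=
      ((hasDerivAt_id x).sub_const m).mul h2
    have h4 : HasDerivAt (fun t => c * (t - m) ^ 2 / 2)
        (c * (2 * (x - m) ^ 1 * 1) / 2) x :=
      ((((hasDerivAt_id x).sub_const m).pow 2).const_mul c).div_const 2
    have h5 := (h3.sub h1).sub h4
    have heq : F x = 1 * f' x + (x - m) * f'' x - f' x - c * (2 * (x - m) ^ 1 * 1) / 2 := by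
      simp only [hF_def]; ring
    rw [heq]
    exact h5.hasDerivWithinAt
  have hFTC : ∫ t in a..b, F t = G b - G a :=
    integral_eq_sub_of_hasDeriv_right_of_le hab.le hGc hderiv hFint
  have hE : f b - f a - (b - a) * ((f' a + f' b) / 2) = -(G b - G a) := by
    simp only [hG_def, hm_def]; ring
  have hsplit : (∫ t in a..m, F t) + ∫ t in m..b, F t = ∫ t in a..b, F t :=
    integral_add_adjacent_intervals hFint1 hFint2
  -- bound functions
  have hbint1 : IntervalIntegrable (fun t => K * (m - t)) volume a m :=
    (continuous_const.mul (continuous_const.sub continuous_id)).intervalIntegrable a m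
  have hbint2 : IntervalIntegrable (fun t => K * (t - m)) volume m b :=
    (continuous_const.mul (continuous_id.sub continuous_const)).intervalIntegrable m b
  have base1 : ∫ t in a..m, K * (m - t) = K * (m - a) ^ 2 / 2 := by
    rw [intervalIntegral.integral_const_mul,
      intervalIntegral.integral_sub intervalIntegrable_const intervalIntegrable_id,
      intervalIntegral.integral_const, integral_id]
    simp [smul_eq_mul]; ring
  have base2 : ∫ t in m..b, K * (t - m) = K * (b - m) ^ 2 / 2 := by
    rw [intervalIntegral.integral_const_mul,
      intervalIntegral.integral_sub intervalIntegrable_id intervalIntegrable_const,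
      integral_id, intervalIntegral.integral_const]
    simp [smul_eq_mul]; ring
  have hbd1 : |∫ t in a..m, F t| ≤ K * (m - a) ^ 2 / 2 := by
    rw [abs_le]
    constructor
    · rw [← base1, ← intervalIntegral.integral_neg]
      apply intervalIntegral.integral_mono_on ham hbint1.neg hFint1
      intro t ht
      have h1 := hm t (hsub1 ht)
      have h2 := hM t (hsub1 ht)
      have h3 : m - t ≥ 0 := by linarith [ht.2]
      simp only [Pi.neg_apply, hF_def, hK_def, hc_def]
      nlinarith
    · rw [← base1]
      apply intervalIntegral.integral_mono_on ham hFint1 hbint1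
      intro t ht
      have h1 := hm t (hsub1 ht)
      have h2 := hM t (hsub1 ht)
      have h3 : m - t ≥ 0 := by linarith [ht.2]
      simp only [Pi.neg_apply, hF_def, hK_def, hc_def]
      nlinarith
  have hbd2 : |∫ t in m..b, F t| ≤ K * (b - m) ^ 2 / 2 := by
    rw [abs_le]
    constructor
    · rw [← base2, ← intervalIntegral.integral_neg]
      apply intervalIntegral.integral_mono_on hmb hbint2.neg hFint2
      intro t ht
      have h1 := hm t (hsub2 ht)
      have h2 := hM t (hsub2 ht)
      have h3 : t - m ≥ 0 := by linarith [ht.1]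
      simp only [Pi.neg_apply, hF_def, hK_def, hc_def]
      nlinarith
    · rw [← base2]
      apply intervalIntegral.integral_mono_on hmb hFint2 hbint2
      intro t ht
      have h1 := hm t (hsub2 ht)
      have h2 := hM t (hsub2 ht)
      have h3 : t - m ≥ 0 := by linarith [ht.1]
      simp only [Pi.neg_apply, hF_def, hK_def, hc_def]
      nlinarith
  have key : |f b - f a - (b - a) * ((f' a + f' b) / 2)|
      ≤ K * (m - a) ^ 2 / 2 + K * (b - m) ^ 2 / 2 := by
    rw [hE, abs_neg, ← hFTC, ← hsplit]
    exact (abs_add_le _ _).trans (add_le_add hbd1 hbd2)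
  have : K * (m - a) ^ 2 / 2 + K * (b - m) ^ 2 / 2 = (b - a) ^ 2 * (M₂ - m₂) / 8 := by
    rw [hK_def, hm_def]; ring
  linarith [key]
end

section
/- Let f ∈ C²([a,b]) with m₂ ≤ f'' ≤ M₂ on [a,b]. Then |f(b) - f(a) - (b-a)·[f'(a) + 2f'((a+b)/2) + f'(b)]/4| ≤ (b-a)²(M₂-m₂)/16. -/
open Set intervalIntegral MeasureTheory

lemma integral_abs_sub_mid (α β : ℝ) (hαβ : α ≤ β) :
    ∫ x in α..β, |x - (α + β) / 2| = (β - α) ^ 2 / 4 := by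
  have hαm : α ≤ (α + β) / 2 := by linarith
  have hmβ : (α + β) / 2 ≤ β := by linarith
  have hint : ∀ u v : ℝ, IntervalIntegrable (fun x => |x - (α + β) / 2|) volume u v :=
    fun u v => (continuous_abs.comp (continuous_id.sub continuous_const)).intervalIntegrable _ _
  have e1 : ∫ x in α..(α + β) / 2, |x - (α + β) / 2|
      = ∫ x in α..(α + β) / 2, ((α + β) / 2 - x) := by
    apply integral_congr
    intro x hx
    rw [uIcc_of_le hαm, mem_Icc] at hx
    have : x - (α + β) / 2 ≤ 0 := by linarith [hx.2]
    simp only [abs_of_nonpos this]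
    ring
  have e2 : ∫ x in ((α + β) / 2)..β, |x - (α + β) / 2|
      = ∫ x in ((α + β) / 2)..β, (x - (α + β) / 2) := by
    apply integral_congr
    intro x hx
    rw [uIcc_of_le hmβ, mem_Icc] at hx
    have : 0 ≤ x - (α + β) / 2 := by linarith [hx.1]
    simp only [abs_of_nonneg this]
  have hsplit := integral_add_adjacent_intervals (hint α ((α + β) / 2)) (hint ((α + β) / 2) β)
  have v1 : ∫ x in α..(α + β) / 2, ((α + β) / 2 - x) = ((β - α) / 2) ^ 2 / 2 := by
    rw [integral_sub intervalIntegrable_const intervalIntegral.intervalIntegrable_id]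
    simp [integral_id, intervalIntegral.integral_const]
    ring
  have v2 : ∫ x in ((α + β) / 2)..β, (x - (α + β) / 2) = ((β - α) / 2) ^ 2 / 2 := by
    rw [integral_sub intervalIntegral.intervalIntegrable_id intervalIntegrable_const]
    simp [integral_id, intervalIntegral.integral_const]
    ring
  rw [← hsplit, e1, e2, v1, v2]
  ring

lemma trap_err (α β K : ℝ) (hαβ : α ≤ β) (g g' g'' : ℝ → ℝ)
    (hg' : ∀ x ∈ Icc α β, HasDerivWithinAt g (g' x) (Icc α β) x)
    (hg'' : ∀ x ∈ Icc α β, HasDerivWithinAt g' (g'' x) (Icc α β) x)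
    (hcont : ContinuousOn g'' (Icc α β))
    (hK : ∀ x ∈ Icc α β, |g'' x| ≤ K) :
    |g β - g α - (β - α) * (g' α + g' β) / 2| ≤ K * (β - α) ^ 2 / 4 := by
  have hcontg : ContinuousOn g (Icc α β) := fun x hx => (hg' x hx).continuousWithinAt
  have hcontg' : ContinuousOn g' (Icc α β) := fun x hx => (hg'' x hx).continuousWithinAt
  have hψcont : ContinuousOn (fun x => -(g'' x * (x - (α + β) / 2))) (Icc α β) :=
    (hcont.mul ((continuous_id.sub continuous_const).continuousOn)).neg
  have hψint : IntervalIntegrable (fun x => -(g'' x * (x - (α + β) / 2))) volume α β :=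
    hψcont.intervalIntegrable_of_Icc hαβ
  have hGcont : ContinuousOn (fun x => g x - g' x * (x - (α + β) / 2)) (Icc α β) :=
    hcontg.sub (hcontg'.mul ((continuous_id.sub continuous_const).continuousOn))
  have hGderiv : ∀ x ∈ Ioo α β,
      HasDerivWithinAt (fun x => g x - g' x * (x - (α + β) / 2))
        (-(g'' x * (x - (α + β) / 2))) (Ioi x) x := by
    intro x hx
    have hxI : x ∈ Icc α β := Ioo_subset_Icc_self hx
    have h1 := (hg' x hxI).sub
      ((hg'' x hxI).mul (((hasDerivAt_id x).sub_const ((α + β) / 2)).hasDerivWithinAt))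
    have h2 : HasDerivWithinAt (fun x => g x - g' x * (x - (α + β) / 2))
        (-(g'' x * (x - (α + β) / 2))) (Icc α β) x := by
      refine h1.congr_deriv ?_; simp only [id_eq]; ring
    exact h2.mono_of_mem_nhdsWithin (mem_nhdsWithin_of_mem_nhds (Icc_mem_nhds hx.1 hx.2))
  have key := integral_eq_sub_of_hasDeriv_right_of_le hαβ hGcont hGderiv hψint
  have e : g β - g α - (β - α) * (g' α + g' β) / 2
      = ∫ x in α..β, -(g'' x * (x - (α + β) / 2)) := by
    rw [key]; ring
  rw [e, ← Real.norm_eq_abs]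
  have hKint : IntervalIntegrable (fun x => K * |x - (α + β) / 2|) volume α β :=
    (continuous_const.mul (continuous_abs.comp
      (continuous_id.sub continuous_const))).intervalIntegrable _ _
  have hnormint : IntervalIntegrable (fun x => ‖-(g'' x * (x - (α + β) / 2))‖) volume α β :=
    hψint.norm
  calc ‖∫ x in α..β, -(g'' x * (x - (α + β) / 2))‖
      ≤ ∫ x in α..β, ‖-(g'' x * (x - (α + β) / 2))‖ :=
        intervalIntegral.norm_integral_le_integral_norm hαβ
    _ ≤ ∫ x in α..β, K * |x - (α + β) / 2| := by
        apply intervalIntegral.integral_mono_on hαβ hnormint hKint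
        intro x hx
        simp only [norm_neg, Real.norm_eq_abs, abs_mul]
        exact mul_le_mul_of_nonneg_right (hK x hx) (abs_nonneg _)
    _ = K * ((β - α) ^ 2 / 4) := by
        rw [intervalIntegral.integral_const_mul, integral_abs_sub_mid α β hαβ]
    _ = K * (β - α) ^ 2 / 4 := by ring


theorem taylor_like_three_points
    (a b m₂ M₂ : ℝ) (f f' f'' : ℝ → ℝ) (hab : a < b)
    (hf' : ∀ x ∈ Set.Icc a b, HasDerivWithinAt f (f' x) (Set.Icc a b) x)
    (hf'' : ∀ x ∈ Set.Icc a b, HasDerivWithinAt f' (f'' x) (Set.Icc a b) x)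
    (hcont : ContinuousOn f'' (Set.Icc a b))
    (hm : ∀ x ∈ Set.Icc a b, m₂ ≤ f'' x)
    (hM : ∀ x ∈ Set.Icc a b, f'' x ≤ M₂) :
    |f b - f a - (b - a) * ((f' a + 2 * f' ((a + b) / 2) + f' b) / 4)|
      ≤ (b - a) ^ 2 * (M₂ - m₂) / 16 := by
  have hq : ∀ x : ℝ, HasDerivAt (fun y => (m₂ + M₂) / 4 * y ^ 2) ((m₂ + M₂) / 2 * x) x := by
    intro x
    have h := (hasDerivAt_pow 2 x).const_mul ((m₂ + M₂) / 4)
    refine h.congr_deriv ?_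
    push_cast; ring
  have hl : ∀ x : ℝ, HasDerivAt (fun y => (m₂ + M₂) / 2 * y) ((m₂ + M₂) / 2) x := by
    intro x
    have h := (hasDerivAt_id x).const_mul ((m₂ + M₂) / 2)
    refine h.congr_deriv ?_
    ring
  have main : ∀ u v : ℝ, u ≤ v → Set.Icc u v ⊆ Set.Icc a b →
      |(f v - (m₂ + M₂) / 4 * v ^ 2) - (f u - (m₂ + M₂) / 4 * u ^ 2)
        - (v - u) * ((f' u - (m₂ + M₂) / 2 * u) + (f' v - (m₂ + M₂) / 2 * v)) / 2|
      ≤ (M₂ - m₂) / 2 * (v - u) ^ 2 / 4 := by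
    intro u v huv hsub
    apply trap_err u v ((M₂ - m₂) / 2) huv
      (fun x => f x - (m₂ + M₂) / 4 * x ^ 2)
      (fun x => f' x - (m₂ + M₂) / 2 * x)
      (fun x => f'' x - (m₂ + M₂) / 2)
    · intro x hx
      exact ((hf' x (hsub hx)).sub (hq x).hasDerivWithinAt).mono hsub
    · intro x hx
      exact ((hf'' x (hsub hx)).sub (hl x).hasDerivWithinAt).mono hsub
    · exact (hcont.sub continuousOn_const).mono hsub
    · intro x hx
      have h1 := hm x (hsub hx)
      have h2 := hM x (hsub hx)
      rw [abs_le]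
      constructor <;> linarith
  have hc1 : a ≤ (a + b) / 2 := by linarith
  have hc2 : (a + b) / 2 ≤ b := by linarith
  have hs1 : Set.Icc a ((a + b) / 2) ⊆ Set.Icc a b :=
    Set.Icc_subset_Icc le_rfl hc2
  have hs2 : Set.Icc ((a + b) / 2) b ⊆ Set.Icc a b :=
    Set.Icc_subset_Icc hc1 le_rfl
  have T1 := main a ((a + b) / 2) hc1 hs1
  have T2 := main ((a + b) / 2) b hc2 hs2
  have hsum : f b - f a - (b - a) * ((f' a + 2 * f' ((a + b) / 2) + f' b) / 4)
      = ((f ((a + b) / 2) - (m₂ + M₂) / 4 * ((a + b) / 2) ^ 2) - (f a - (m₂ + M₂) / 4 * a ^ 2)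
          - ((a + b) / 2 - a) * ((f' a - (m₂ + M₂) / 2 * a)
            + (f' ((a + b) / 2) - (m₂ + M₂) / 2 * ((a + b) / 2))) / 2)
        + ((f b - (m₂ + M₂) / 4 * b ^ 2) - (f ((a + b) / 2) - (m₂ + M₂) / 4 * ((a + b) / 2) ^ 2)
          - (b - (a + b) / 2) * ((f' ((a + b) / 2) - (m₂ + M₂) / 2 * ((a + b) / 2))
            + (f' b - (m₂ + M₂) / 2 * b)) / 2) := by ring
  rw [hsum]
  have habs := abs_add_le
    ((f ((a + b) / 2) - (m₂ + M₂) / 4 * ((a + b) / 2) ^ 2) - (f a - (m₂ + M₂) / 4 * a ^ 2)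
      - ((a + b) / 2 - a) * ((f' a - (m₂ + M₂) / 2 * a)
        + (f' ((a + b) / 2) - (m₂ + M₂) / 2 * ((a + b) / 2))) / 2)
    ((f b - (m₂ + M₂) / 4 * b ^ 2) - (f ((a + b) / 2) - (m₂ + M₂) / 4 * ((a + b) / 2) ^ 2)
      - (b - (a + b) / 2) * ((f' ((a + b) / 2) - (m₂ + M₂) / 2 * ((a + b) / 2))
        + (f' b - (m₂ + M₂) / 2 * b)) / 2)
  have e1 : ((a + b) / 2 - a) ^ 2 = (b - a) ^ 2 / 4 := by ring
  have e2 : (b - (a + b) / 2) ^ 2 = (b - a) ^ 2 / 4 := by ring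
  rw [e1] at T1
  rw [e2] at T2
  calc _ ≤ _ := habs
    _ ≤ (b - a) ^ 2 * (M₂ - m₂) / 16 := by linarith
end

section
/- Let f ∈ C²([a,b]) with m₂ ≤ f'' ≤ M₂ on [a,b]. For every x ∈ [a,b], |f(x) - [Π(f)(x) - ((f'(b)-f'(a))/(2(b-a)))·(b-x)(x-a)]| ≤ (b-a)²(M₂-m₂)/32, where Π(f) is the linear Lagrange interpolant of f at a and b. -/
open Set MeasureTheory intervalIntegral

private lemma ftc_aux {p q : ℝ} (hpq : p ≤ q) {F F' : ℝ → ℝ}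
    (hF : ContinuousOn F (Set.Icc p q))
    (hF' : ∀ t ∈ Set.Ioo p q, HasDerivAt F (F' t) t)
    (hint : IntervalIntegrable F' MeasureTheory.volume p q) :
    ∫ t in p..q, F' t = F q - F p :=
  intervalIntegral.integral_eq_sub_of_hasDeriv_right_of_le hpq hF
    (fun t ht => (hF' t ht).hasDerivWithinAt) hint

private lemma integral_linear (c p q : ℝ) :
    ∫ t in p..q, (c - t) = c * (q - p) - (q ^ 2 - p ^ 2) / 2 := by
  have h : ∀ t : ℝ, HasDerivAt (fun t : ℝ => c * t - t ^ 2 / 2) (c - t) t := by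
    intro t
    have h1 : HasDerivAt (fun t : ℝ => c * t - t ^ 2 / 2)
        (c * 1 - 2 * t ^ 1 / 2) t :=
      ((hasDerivAt_id t).const_mul c).sub ((hasDerivAt_pow 2 t).div_const 2)
    convert h1 using 1
    ring
  rw [intervalIntegral.integral_eq_sub_of_hasDerivAt (fun t _ => h t)
    ((Continuous.continuousOn (by continuity)).intervalIntegrable)]
  ring

private lemma integral_linear' (c p q : ℝ) :
    ∫ t in p..q, (t - c) = (q ^ 2 - p ^ 2) / 2 - c * (q - p) := by
  have h : ∀ t : ℝ, HasDerivAt (fun t : ℝ => t ^ 2 / 2 - c * t) (t - c) t := by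
    intro t
    have h1 : HasDerivAt (fun t : ℝ => t ^ 2 / 2 - c * t)
        (2 * t ^ 1 / 2 - c * 1) t :=
      ((hasDerivAt_pow 2 t).div_const 2).sub ((hasDerivAt_id t).const_mul c)
    convert h1 using 1
    ring
  rw [intervalIntegral.integral_eq_sub_of_hasDerivAt (fun t _ => h t)
    ((Continuous.continuousOn (by continuity)).intervalIntegrable)]
  ring

private lemma integral_abs_linear {p q : ℝ} (hpq : p ≤ q) :
    ∫ t in p..q, |(p + q) / 2 - t| = (q - p) ^ 2 / 4 := by
  set m := (p + q) / 2 with hm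
  have hpm : p ≤ m := by rw [hm]; linarith
  have hmq : m ≤ q := by rw [hm]; linarith
  have i1 : IntervalIntegrable (fun t => |m - t|) MeasureTheory.volume p m :=
    (Continuous.continuousOn (by continuity)).intervalIntegrable
  have i2 : IntervalIntegrable (fun t => |m - t|) MeasureTheory.volume m q :=
    (Continuous.continuousOn (by continuity)).intervalIntegrable
  have hsplit := intervalIntegral.integral_add_adjacent_intervals i1 i2
  have e1 : (∫ t in p..m, |m - t|) = ∫ t in p..m, (m - t) := by
    apply intervalIntegral.integral_congr
    intro t ht
    rw [Set.uIcc_of_le hpm] at ht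
    exact abs_of_nonneg (by linarith [ht.2])
  have e2 : (∫ t in m..q, |m - t|) = ∫ t in m..q, (t - m) := by
    apply intervalIntegral.integral_congr
    intro t ht
    rw [Set.uIcc_of_le hmq] at ht
    show |m - t| = t - m
    rw [abs_sub_comm]
    exact abs_of_nonneg (by linarith [ht.1])
  rw [← hsplit, e1, e2, integral_linear, integral_linear', hm]
  ring

private lemma key_bound {p q K : ℝ} (hpq : p ≤ q) (hK : 0 ≤ K) {g : ℝ → ℝ}
    (hg : ContinuousOn g (Set.Icc p q)) (hgK : ∀ t ∈ Set.Icc p q, |g t| ≤ K) :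
    |∫ t in p..q, ((p + q) / 2 - t) * g t| ≤ K * (q - p) ^ 2 / 4 := by
  have hgi : IntervalIntegrable (fun t => ((p + q) / 2 - t) * g t)
      MeasureTheory.volume p q :=
    (((continuousOn_const.sub continuousOn_id).mul hg).mono
      (by rw [Set.uIcc_of_le hpq])).intervalIntegrable
  have habs : IntervalIntegrable (fun t => |((p + q) / 2 - t) * g t|)
      MeasureTheory.volume p q := hgi.abs
  have hKabs : IntervalIntegrable (fun t => K * |(p + q) / 2 - t|)
      MeasureTheory.volume p q :=
    (Continuous.continuousOn (by continuity)).intervalIntegrable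
  calc |∫ t in p..q, ((p + q) / 2 - t) * g t|
      ≤ ∫ t in p..q, |((p + q) / 2 - t) * g t| :=
        intervalIntegral.abs_integral_le_integral_abs hpq
    _ ≤ ∫ t in p..q, K * |(p + q) / 2 - t| := by
        apply intervalIntegral.integral_mono_on hpq habs hKabs
        intro t ht
        rw [abs_mul, mul_comm]
        exact mul_le_mul (hgK t ht) le_rfl (abs_nonneg _) hK
    _ = K * (q - p) ^ 2 / 4 := by
        rw [intervalIntegral.integral_const_mul, integral_abs_linear hpq]
        ring

theorem corrected_interpolation_error
    (a b m₂ M₂ : ℝ) (f f' f'' : ℝ → ℝ) (hab : a < b)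
    (hf' : ∀ x ∈ Set.Icc a b, HasDerivWithinAt f (f' x) (Set.Icc a b) x)
    (hf'' : ∀ x ∈ Set.Icc a b, HasDerivWithinAt f' (f'' x) (Set.Icc a b) x)
    (hcont : ContinuousOn f'' (Set.Icc a b))
    (hm : ∀ x ∈ Set.Icc a b, m₂ ≤ f'' x)
    (hM : ∀ x ∈ Set.Icc a b, f'' x ≤ M₂)
    (x : ℝ) (hx : x ∈ Set.Icc a b) :
    |f x - ((f a * (x - b) / (a - b) + f b * (x - a) / (b - a))
        - ((f' b - f' a) / (2 * (b - a))) * (b - x) * (x - a))|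
      ≤ (b - a) ^ 2 * (M₂ - m₂) / 32 := by
  obtain ⟨hax, hxb⟩ := hx
  have hba : (0:ℝ) < b - a := by linarith
  set μ := (m₂ + M₂) / 2 with hμ
  set K := (M₂ - m₂) / 2 with hK
  have hK0 : 0 ≤ K := by
    have h1 := hm a ⟨le_rfl, le_of_lt hab⟩
    have h2 := hM a ⟨le_rfl, le_of_lt hab⟩
    rw [hK]; linarith
  -- continuity
  have hf'cont : ContinuousOn f' (Set.Icc a b) := fun t ht =>
    (hf'' t ht).continuousWithinAt
  have hfcont : ContinuousOn f (Set.Icc a b) := fun t ht =>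
    (hf' t ht).continuousWithinAt
  -- derivatives at interior points
  have hfD : ∀ t ∈ Set.Ioo a b, HasDerivAt f (f' t) t := fun t ht =>
    (hf' t (Set.Ioo_subset_Icc_self ht)).hasDerivAt (Icc_mem_nhds ht.1 ht.2)
  have hf'D : ∀ t ∈ Set.Ioo a b, HasDerivAt f' (f'' t) t := fun t ht =>
    (hf'' t (Set.Ioo_subset_Icc_self ht)).hasDerivAt (Icc_mem_nhds ht.1 ht.2)
  -- the antiderivative family
  set G : ℝ → ℝ → ℝ := fun c t => (c - t) * (f' t - μ * t) + f t - μ * t ^ 2 / 2 with hG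
  have hGderiv : ∀ c, ∀ t ∈ Set.Ioo a b,
      HasDerivAt (G c) ((c - t) * (f'' t - μ)) t := by
    intro c t ht
    have h1 : HasDerivAt (fun t => (c - t) * (f' t - μ * t))
        ((0 - 1) * (f' t - μ * t) + (c - t) * (f'' t - μ * 1)) t :=
      ((hasDerivAt_const t c).sub (hasDerivAt_id t)).mul
        ((hf'D t ht).sub ((hasDerivAt_id t).const_mul μ))
    have h2 : HasDerivAt (fun t => (c - t) * (f' t - μ * t) + f t - μ * t ^ 2 / 2)
        (((0 - 1) * (f' t - μ * t) + (c - t) * (f'' t - μ * 1)) + f' t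
          - μ * (2 * t ^ 1) / 2) t := by
      exact (h1.add (hfD t ht)).sub (((hasDerivAt_pow 2 t).const_mul μ).div_const 2)
    convert h2 using 1
    ring
  have hGcont : ∀ c, ContinuousOn (G c) (Set.Icc a b) := by
    intro c
    exact (((continuousOn_const.sub continuousOn_id).mul
      (hf'cont.sub (continuousOn_const.mul continuousOn_id))).add hfcont).sub
      ((continuousOn_const.mul (continuousOn_pow 2)).div_const 2)
  have hIax : Set.Icc a x ⊆ Set.Icc a b := Set.Icc_subset_Icc le_rfl hxb
  have hIxb : Set.Icc x b ⊆ Set.Icc a b := Set.Icc_subset_Icc hax le_rfl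
  have hgcont : ContinuousOn (fun t => f'' t - μ) (Set.Icc a b) :=
    hcont.sub continuousOn_const
  -- the two key integrals via FTC
  have hJ1 : (∫ t in a..x, ((a + x) / 2 - t) * (f'' t - μ))
      = G ((a + x) / 2) x - G ((a + x) / 2) a := by
    apply ftc_aux hax ((hGcont _).mono hIax)
    · intro t ht
      exact hGderiv _ t ⟨ht.1, lt_of_lt_of_le ht.2 hxb⟩
    · apply ContinuousOn.intervalIntegrable
      rw [Set.uIcc_of_le hax]
      exact (continuousOn_const.sub continuousOn_id).mul (hgcont.mono hIax)
  have hJ2 : (∫ t in x..b, ((x + b) / 2 - t) * (f'' t - μ))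
      = G ((x + b) / 2) b - G ((x + b) / 2) x := by
    apply ftc_aux hxb ((hGcont _).mono hIxb)
    · intro t ht
      exact hGderiv _ t ⟨lt_of_le_of_lt hax ht.1, ht.2⟩
    · apply ContinuousOn.intervalIntegrable
      rw [Set.uIcc_of_le hxb]
      exact (continuousOn_const.sub continuousOn_id).mul (hgcont.mono hIxb)
  set J₁ := ∫ t in a..x, ((a + x) / 2 - t) * (f'' t - μ) with hJ₁def
  set J₂ := ∫ t in x..b, ((x + b) / 2 - t) * (f'' t - μ) with hJ₂def
  -- bounds on J₁, J₂
  have hgK : ∀ t ∈ Set.Icc a b, |f'' t - μ| ≤ K := by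
    intro t ht
    rw [abs_le]
    have h1 := hm t ht
    have h2 := hM t ht
    rw [hμ, hK]
    constructor <;> linarith
  have hb1 : |J₁| ≤ K * (x - a) ^ 2 / 4 :=
    key_bound hax hK0 (hgcont.mono hIax) (fun t ht => hgK t (hIax ht))
  have hb2 : |J₂| ≤ K * (b - x) ^ 2 / 4 :=
    key_bound hxb hK0 (hgcont.mono hIxb) (fun t ht => hgK t (hIxb ht))
  -- the algebraic identity
  have hid : f x - ((f a * (x - b) / (a - b) + f b * (x - a) / (b - a))
        - ((f' b - f' a) / (2 * (b - a))) * (b - x) * (x - a))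
      = ((b - x) * J₁ - (x - a) * J₂) / (b - a) := by
    rw [hJ1, hJ2]
    simp only [hG]
    have hab' : a - b ≠ 0 := by linarith
    have hba' : b - a ≠ 0 := by linarith
    field_simp
    ring
  rw [hid]
  have habs : |((b - x) * J₁ - (x - a) * J₂) / (b - a)|
      ≤ ((b - x) * (K * (x - a) ^ 2 / 4) + (x - a) * (K * (b - x) ^ 2 / 4)) / (b - a) := by
    rw [abs_div, abs_of_pos hba]
    gcongr ?_ / (b - a)
    calc |(b - x) * J₁ - (x - a) * J₂|
        ≤ |(b - x) * J₁| + |(x - a) * J₂| := abs_sub _ _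
      _ = (b - x) * |J₁| + (x - a) * |J₂| := by
          rw [abs_mul, abs_mul, abs_of_nonneg (by linarith : (0:ℝ) ≤ b - x),
            abs_of_nonneg (by linarith : (0:ℝ) ≤ x - a)]
      _ ≤ (b - x) * (K * (x - a) ^ 2 / 4) + (x - a) * (K * (b - x) ^ 2 / 4) := by
          apply add_le_add
          · exact mul_le_mul_of_nonneg_left hb1 (by linarith)
          · exact mul_le_mul_of_nonneg_left hb2 (by linarith)
  refine habs.trans ?_
  have hprod : (x - a) * (b - x) ≤ (b - a) ^ 2 / 4 := by
    nlinarith [sq_nonneg (a + b - 2 * x)]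
  have hstep : ((b - x) * (K * (x - a) ^ 2 / 4) + (x - a) * (K * (b - x) ^ 2 / 4)) / (b - a)
      = K * ((x - a) * (b - x)) / 4 := by
    field_simp
    ring
  rw [hstep]
  have h := mul_le_mul_of_nonneg_left hprod hK0
  have h2 : K * ((b - a) ^ 2 / 4) / 4 = (b - a) ^ 2 * (M₂ - m₂) / 32 := by
    rw [hK]; ring
  linarith
end

section
/- Let f ∈ C²([a,b]) with m₂ ≤ f'' ≤ M₂ on [a,b] and f'(a) = f'(b). Then for all x ∈ [a,b], the P₁-Lagrange interpolation error satisfies |Π(f)(x) - f(x)| ≤ (b-a)²(M₂-m₂)/32. -/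
open intervalIntegral MeasureTheory Set

private lemma integral_linear'_s7 (α β u v : ℝ) :
    ∫ t in u..v, (α * t + β) = α / 2 * v ^ 2 + β * v - (α / 2 * u ^ 2 + β * u) := by
  have h : ∀ t ∈ Set.uIcc u v, HasDerivAt (fun s : ℝ => α / 2 * s ^ 2 + β * s) (α * t + β) t := by
    intro t _
    have h1 : HasDerivAt (fun s : ℝ => s ^ 2) (2 * t) t := by simpa using hasDerivAt_pow 2 t
    have := (h1.const_mul (α / 2)).add ((hasDerivAt_id t).const_mul β)
    exact this.congr_deriv (by ring)
  have hi : IntervalIntegrable (fun t : ℝ => α * t + β) volume u v :=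
    (Continuous.intervalIntegrable (by continuity) u v)
  simpa using intervalIntegral.integral_eq_sub_of_hasDerivAt h hi

set_option maxHeartbeats 1000000 in
theorem periodic_interpolation_error
    (a b m₂ M₂ : ℝ) (f f' f'' : ℝ → ℝ) (hab : a < b)
    (hf' : ∀ x ∈ Set.Icc a b, HasDerivWithinAt f (f' x) (Set.Icc a b) x)
    (hf'' : ∀ x ∈ Set.Icc a b, HasDerivWithinAt f' (f'' x) (Set.Icc a b) x)
    (hcont : ContinuousOn f'' (Set.Icc a b))
    (hm : ∀ x ∈ Set.Icc a b, m₂ ≤ f'' x)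
    (hM : ∀ x ∈ Set.Icc a b, f'' x ≤ M₂)
    (hper : f' a = f' b)
    (x : ℝ) (hx : x ∈ Set.Icc a b) :
    |(f a * (x - b) / (a - b) + f b * (x - a) / (b - a)) - f x|
      ≤ (b - a) ^ 2 * (M₂ - m₂) / 32 := by
  obtain ⟨hax, hxb⟩ := hx
  have hab' : a ≤ b := hab.le
  -- kernel
  set K : ℝ → ℝ := fun t => min ((b - x) * (t - a)) ((x - a) * (b - t)) with hK
  have hKcont : Continuous K := by
    apply Continuous.min <;> continuity
  set c : ℝ := (x - a) * (b - x) / 2 with hc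
  set μ : ℝ := (m₂ + M₂) / 2 with hμ
  set d : ℝ := (M₂ - m₂) / 2 with hd
  -- continuity of f, f'
  have hfc : ContinuousOn f (Set.Icc a b) := fun t ht => (hf' t ht).continuousWithinAt
  have hf'c : ContinuousOn f' (Set.Icc a b) := fun t ht => (hf'' t ht).continuousWithinAt
  have hDf : ∀ t ∈ Set.Ioo a b, HasDerivAt f (f' t) t := by
    intro t ht
    exact (hf' t (Set.Ioo_subset_Icc_self ht)).hasDerivAt (Icc_mem_nhds ht.1 ht.2)
  have hDf' : ∀ t ∈ Set.Ioo a b, HasDerivAt f' (f'' t) t := by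
    intro t ht
    exact (hf'' t (Set.Ioo_subset_Icc_self ht)).hasDerivAt (Icc_mem_nhds ht.1 ht.2)
  -- generic FTC on subintervals of [a,b]
  have FTC : ∀ u v : ℝ, a ≤ u → u ≤ v → v ≤ b → ∀ G G' : ℝ → ℝ,
      ContinuousOn G (Set.Icc a b) →
      (∀ t ∈ Set.Ioo a b, HasDerivAt G (G' t) t) →
      ContinuousOn G' (Set.Icc a b) →
      ∫ t in u..v, G' t = G v - G u := by
    intro u v hau huv hvb G G' hGc hGd hG'c
    apply intervalIntegral.integral_eq_sub_of_hasDeriv_right_of_le huv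
      (hGc.mono (Set.Icc_subset_Icc hau hvb))
      (fun t ht => (hGd t ⟨lt_of_le_of_lt hau ht.1, lt_of_lt_of_le ht.2 hvb⟩).hasDerivWithinAt)
    apply ContinuousOn.intervalIntegrable
    rw [Set.uIcc_of_le huv]
    exact hG'c.mono (Set.Icc_subset_Icc hau hvb)
  -- integrability on subintervals
  have hsubint : ∀ (g : ℝ → ℝ), ContinuousOn g (Set.Icc a b) → ∀ u v : ℝ, a ≤ u → u ≤ v → v ≤ b →
      IntervalIntegrable g volume u v := by
    intro g hg u v hau huv hvb
    apply ContinuousOn.intervalIntegrable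
    rw [Set.uIcc_of_le huv]
    exact hg.mono (Set.Icc_subset_Icc hau hvb)
  -- the three FTC identities
  have I0 : ∫ t in a..b, f'' t = 0 := by
    rw [FTC a b le_rfl hab' le_rfl f' f'' hf'c hDf' hcont, hper]
    ring
  have I1 : ∫ t in a..x, (t - a) * f'' t = (x - a) * f' x - f x + f a := by
    have h := FTC a x le_rfl hax hxb (fun t => (t - a) * f' t - f t) (fun t => (t - a) * f'' t)
      (((continuousOn_id.sub continuousOn_const).mul hf'c).sub hfc)
      (fun t ht => by
        have h1 := (((hasDerivAt_id t).sub_const a).mul (hDf' t ht)).sub (hDf t ht)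
        exact h1.congr_deriv (by simp only [id_eq]; ring))
      ((continuousOn_id.sub continuousOn_const).mul hcont)
    rw [h]; ring
  have I2 : ∫ t in x..b, (b - t) * f'' t = f b - f x - (b - x) * f' x := by
    have h := FTC x b hax hxb le_rfl (fun t => (b - t) * f' t + f t) (fun t => (b - t) * f'' t)
      (((continuousOn_const.sub continuousOn_id).mul hf'c).add hfc)
      (fun t ht => by
        have h1 := (((hasDerivAt_const t b).sub (hasDerivAt_id t)).mul (hDf' t ht)).add (hDf t ht)
        exact h1.congr_deriv (by simp only [Pi.sub_apply, id_eq]; ring))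
      ((continuousOn_const.sub continuousOn_id).mul hcont)
    rw [h]; ring
  -- ∫ K f'' expressed via I1, I2
  have hKf''int : ∀ u v : ℝ, a ≤ u → u ≤ v → v ≤ b →
      IntervalIntegrable (fun t => K t * f'' t) volume u v :=
    hsubint _ (hKcont.continuousOn.mul hcont)
  have key1 : ∫ t in a..b, K t * f'' t
      = (b - x) * ((x - a) * f' x - f x + f a) + (x - a) * (f b - f x - (b - x) * f' x) := by
    rw [← intervalIntegral.integral_add_adjacent_intervals
      (hKf''int a x le_rfl hax hxb) (hKf''int x b hax hxb le_rfl)]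
    have e1 : ∫ t in a..x, K t * f'' t = (b - x) * ∫ t in a..x, (t - a) * f'' t := by
      rw [← intervalIntegral.integral_const_mul]
      apply intervalIntegral.integral_congr
      intro t ht
      rw [Set.uIcc_of_le hax] at ht
      have h1 : (b - x) * (t - a) ≤ (x - a) * (b - t) := by nlinarith [ht.1, ht.2]
      simp only [hK, min_eq_left h1]
      ring
    have e2 : ∫ t in x..b, K t * f'' t = (x - a) * ∫ t in x..b, (b - t) * f'' t := by
      rw [← intervalIntegral.integral_const_mul]
      apply intervalIntegral.integral_congr
      intro t ht
      rw [Set.uIcc_of_le hxb] at ht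
      have h1 : (x - a) * (b - t) ≤ (b - x) * (t - a) := by nlinarith [ht.1, ht.2]
      simp only [hK, min_eq_right h1]
      ring
    rw [e1, e2, I1, I2]
  -- ∫ K = c * (b - a)
  have hJK : ∫ t in a..b, K t = c * (b - a) := by
    rw [← intervalIntegral.integral_add_adjacent_intervals
      (hKcont.intervalIntegrable a x) (hKcont.intervalIntegrable x b)]
    have e1 : ∫ t in a..x, K t = ∫ t in a..x, ((b - x) * t + (-(b - x) * a)) := by
      apply intervalIntegral.integral_congr
      intro t ht
      rw [Set.uIcc_of_le hax] at ht
      have h1 : (b - x) * (t - a) ≤ (x - a) * (b - t) := by nlinarith [ht.1, ht.2]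
      simp only [hK, min_eq_left h1]
      ring
    have e2 : ∫ t in x..b, K t = ∫ t in x..b, (-(x - a) * t + (x - a) * b) := by
      apply intervalIntegral.integral_congr
      intro t ht
      rw [Set.uIcc_of_le hxb] at ht
      have h1 : (x - a) * (b - t) ≤ (b - x) * (t - a) := by nlinarith [ht.1, ht.2]
      simp only [hK, min_eq_right h1]
      ring
    rw [e1, e2, integral_linear'_s7, integral_linear'_s7, hc]
    ring
  -- shifted identity
  have key2 : ∫ t in a..b, (K t - c) * (f'' t - μ) = ∫ t in a..b, K t * f'' t := by
    have expand : ∀ t : ℝ, (K t - c) * (f'' t - μ)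
        = K t * f'' t + (-μ) * K t + (-c) * f'' t + c * μ := by
      intro t; ring
    have i1 := hKf''int a b le_rfl hab' le_rfl
    have i2 : IntervalIntegrable (fun t => (-μ) * K t) volume a b :=
      (continuous_const.mul hKcont).intervalIntegrable a b
    have i3 : IntervalIntegrable (fun t => (-c) * f'' t) volume a b :=
      hsubint _ (hcont.const_smul (-c)) a b le_rfl hab' le_rfl
    have i4 : IntervalIntegrable (fun _ : ℝ => c * μ) volume a b :=
      intervalIntegrable_const
    calc ∫ t in a..b, (K t - c) * (f'' t - μ)
        = ∫ t in a..b, (K t * f'' t + (-μ) * K t + (-c) * f'' t + c * μ) := by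
          apply intervalIntegral.integral_congr; intro t _; exact expand t
      _ = (∫ t in a..b, K t * f'' t) + (∫ t in a..b, (-μ) * K t)
          + (∫ t in a..b, (-c) * f'' t) + ∫ t in a..b, (c * μ : ℝ) := by
          rw [intervalIntegral.integral_add ((i1.add i2).add i3) i4,
            intervalIntegral.integral_add (i1.add i2) i3,
            intervalIntegral.integral_add i1 i2]
      _ = ∫ t in a..b, K t * f'' t := by
          rw [intervalIntegral.integral_const_mul, intervalIntegral.integral_const_mul,
            hJK, I0, intervalIntegral.integral_const]
          simp only [smul_eq_mul]
          ring
  -- pointwise bound and integral estimate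
  have habs : |∫ t in a..b, (K t - c) * (f'' t - μ)| ≤ ∫ t in a..b, |K t - c| * d := by
    calc |∫ t in a..b, (K t - c) * (f'' t - μ)|
        ≤ ∫ t in a..b, |(K t - c) * (f'' t - μ)| :=
          intervalIntegral.abs_integral_le_integral_abs hab'
      _ ≤ ∫ t in a..b, |K t - c| * d := by
          apply intervalIntegral.integral_mono_on hab'
          · exact hsubint _ (((hKcont.continuousOn.sub continuousOn_const).mul
              (hcont.sub continuousOn_const)).abs) a b le_rfl hab' le_rfl
          · exact (((hKcont.sub continuous_const).abs).mul continuous_const).intervalIntegrable a b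
          · intro t ht
            rw [abs_mul]
            apply mul_le_mul_of_nonneg_left _ (abs_nonneg _)
            rw [abs_le]
            constructor
            · have := hm t ht; simp only [hμ, hd]; linarith
            · have := hM t ht; simp only [hμ, hd]; linarith
  -- compute ∫ |K - c|
  set m1 : ℝ := a + (x - a) / 2 with hm1
  set m2 : ℝ := x + (b - x) / 2 with hm2
  have ham1 : a ≤ m1 := by simp only [hm1]; linarith
  have hm1x : m1 ≤ x := by simp only [hm1]; linarith
  have hxm2 : x ≤ m2 := by simp only [hm2]; linarith
  have hm2b : m2 ≤ b := by simp only [hm2]; linarith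
  have hAcont : Continuous (fun t => |K t - c|) := (hKcont.sub continuous_const).abs
  have hT : ∫ t in a..b, |K t - c| = (x - a) * (b - x) * (b - a) / 4 := by
    rw [← intervalIntegral.integral_add_adjacent_intervals (a := a) (b := x) (c := b)
        (hAcont.intervalIntegrable a x) (hAcont.intervalIntegrable x b),
      ← intervalIntegral.integral_add_adjacent_intervals (a := a) (b := m1) (c := x)
        (hAcont.intervalIntegrable a m1) (hAcont.intervalIntegrable m1 x),
      ← intervalIntegral.integral_add_adjacent_intervals (a := x) (b := m2) (c := b)
        (hAcont.intervalIntegrable x m2) (hAcont.intervalIntegrable m2 b)]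
    have e1 : ∫ t in a..m1, |K t - c| = ∫ t in a..m1, (-(b - x) * t + ((b - x) * a + c)) := by
      apply intervalIntegral.integral_congr
      intro t ht
      rw [Set.uIcc_of_le ham1] at ht
      obtain ⟨ht1, ht2⟩ := ht
      have ht2' : t ≤ x := le_trans ht2 hm1x
      have h1 : (b - x) * (t - a) ≤ (x - a) * (b - t) := by nlinarith
      have ht2'' : t ≤ a + (x - a) / 2 := by rw [← hm1]; exact ht2
      have h2 : (b - x) * (t - a) - c ≤ 0 := by rw [hc]; nlinarith
      simp only [hK, min_eq_left h1]
      rw [abs_of_nonpos h2]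
      ring
    have e2 : ∫ t in m1..x, |K t - c| = ∫ t in m1..x, ((b - x) * t + (-(b - x) * a - c)) := by
      apply intervalIntegral.integral_congr
      intro t ht
      rw [Set.uIcc_of_le hm1x] at ht
      obtain ⟨ht1, ht2⟩ := ht
      have ht1' : a ≤ t := le_trans ham1 ht1
      have h1 : (b - x) * (t - a) ≤ (x - a) * (b - t) := by nlinarith
      have ht1'' : a + (x - a) / 2 ≤ t := by rw [← hm1]; exact ht1
      have h2 : 0 ≤ (b - x) * (t - a) - c := by rw [hc]; nlinarith
      simp only [hK, min_eq_left h1]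
      rw [abs_of_nonneg h2]
      ring
    have e3 : ∫ t in x..m2, |K t - c| = ∫ t in x..m2, (-(x - a) * t + ((x - a) * b - c)) := by
      apply intervalIntegral.integral_congr
      intro t ht
      rw [Set.uIcc_of_le hxm2] at ht
      obtain ⟨ht1, ht2⟩ := ht
      have ht2' : t ≤ b := le_trans ht2 hm2b
      have h1 : (x - a) * (b - t) ≤ (b - x) * (t - a) := by nlinarith
      have ht2'' : t ≤ x + (b - x) / 2 := by rw [← hm2]; exact ht2
      have h2 : 0 ≤ (x - a) * (b - t) - c := by rw [hc]; nlinarith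
      simp only [hK, min_eq_right h1]
      rw [abs_of_nonneg h2]
      ring
    have e4 : ∫ t in m2..b, |K t - c| = ∫ t in m2..b, ((x - a) * t + (c - (x - a) * b)) := by
      apply intervalIntegral.integral_congr
      intro t ht
      rw [Set.uIcc_of_le hm2b] at ht
      obtain ⟨ht1, ht2⟩ := ht
      have ht1' : x ≤ t := le_trans hxm2 ht1
      have h1 : (x - a) * (b - t) ≤ (b - x) * (t - a) := by nlinarith
      have ht1''' : x + (b - x) / 2 ≤ t := by rw [← hm2]; exact ht1
      have h2 : (x - a) * (b - t) - c ≤ 0 := by rw [hc]; nlinarith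
      simp only [hK, min_eq_right h1]
      rw [abs_of_nonpos h2]
      ring
    rw [e1, e2, e3, e4, integral_linear'_s7, integral_linear'_s7, integral_linear'_s7, integral_linear'_s7]
    simp only [hm1, hm2, hc]
    ring
  -- assemble the final bound
  have hM2m2 : 0 ≤ M₂ - m₂ := by
    have h1 := hm a ⟨le_refl a, hab'⟩
    have h2 := hM a ⟨le_refl a, hab'⟩
    linarith
  have hdT : ∫ t in a..b, |K t - c| * d = (x - a) * (b - x) * (b - a) / 4 * d := by
    rw [intervalIntegral.integral_mul_const, hT]
  have hfinal : |∫ t in a..b, K t * f'' t| ≤ (x - a) * (b - x) * (b - a) / 4 * d := by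
    rw [← key2]
    rw [hdT] at habs
    exact habs
  -- relate goal LHS to the kernel integral
  have hS : (f a * (x - b) / (a - b) + f b * (x - a) / (b - a) - f x) * (b - a)
      = ∫ t in a..b, K t * f'' t := by
    rw [key1]
    have hne : a - b ≠ 0 := by intro h; linarith
    have hne' : b - a ≠ 0 := by intro h; linarith
    field_simp
    ring
  have hgoal : |f a * (x - b) / (a - b) + f b * (x - a) / (b - a) - f x| * (b - a)
      ≤ (x - a) * (b - x) * (b - a) / 4 * d := by
    have := hfinal
    rw [← hS, abs_mul, abs_of_pos (by linarith : (0:ℝ) < b - a)] at this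
    exact this
  have hba : (0:ℝ) < b - a := by linarith
  have h1 : |f a * (x - b) / (a - b) + f b * (x - a) / (b - a) - f x|
      ≤ (x - a) * (b - x) / 4 * d := by
    have := (mul_le_mul_iff_of_pos_right hba).mp (by linarith [hgoal] : |f a * (x - b) / (a - b) + f b * (x - a) / (b - a) - f x| * (b - a) ≤ ((x - a) * (b - x) / 4 * d) * (b - a))
    exact this
  calc |f a * (x - b) / (a - b) + f b * (x - a) / (b - a) - f x|
      ≤ (x - a) * (b - x) / 4 * d := h1
    _ ≤ (b - a) ^ 2 * (M₂ - m₂) / 32 := by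
        simp only [hd]
        nlinarith [sq_nonneg ((x - a) - (b - x)), hM2m2, mul_nonneg (sub_nonneg.mpr hax) (sub_nonneg.mpr hxb)]
end

section
/- Let f ∈ C²([a,b]) with m₂ ≤ f'' ≤ M₂ on [a,b]. Then the corrected trapezoidal rule satisfies |∫_a^b f(x)dx - (b-a)(f(a)+f(b))/2 + (b-a)²(f'(b)-f'(a))/12| ≤ (b-a)³(M₂-m₂)/48. -/
open Set MeasureTheory intervalIntegral

theorem corrected_trapezoid_error
    (a b m₂ M₂ : ℝ) (f f' f'' : ℝ → ℝ) (hab : a < b)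
    (hf' : ∀ x ∈ Set.Icc a b, HasDerivWithinAt f (f' x) (Set.Icc a b) x)
    (hf'' : ∀ x ∈ Set.Icc a b, HasDerivWithinAt f' (f'' x) (Set.Icc a b) x)
    (hcont : ContinuousOn f'' (Set.Icc a b))
    (hm : ∀ x ∈ Set.Icc a b, m₂ ≤ f'' x)
    (hM : ∀ x ∈ Set.Icc a b, f'' x ≤ M₂) :
    |(∫ x in a..b, f x) - (b - a) * ((f a + f b) / 2)
        + (b - a) ^ 2 * (f' b - f' a) / 12|
      ≤ (b - a) ^ 3 * (M₂ - m₂) / 48 := by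
  have hab' : a ≤ b := hab.le
  set c : ℝ := (a + b) / 2 with hc
  set L : ℝ := b - a with hL
  have hL0 : (0:ℝ) < L := by rw [hL]; linarith
  have hL2 : (0:ℝ) < L ^ 2 := by positivity
  set g : ℝ → ℝ := fun x => (x - c) ^ 2 / 2 - L ^ 2 / 24 with hg
  have hgc : Continuous g := by fun_prop
  have hfc : ContinuousOn f (Icc a b) := fun x hx => (hf' x hx).continuousWithinAt
  have hf'c : ContinuousOn f' (Icc a b) := fun x hx => (hf'' x hx).continuousWithinAt
  -- derivative of g
  have hgd : ∀ x : ℝ, HasDerivAt g (x - c) x := by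
    intro x
    have h1 := ((((hasDerivAt_id x).sub_const c).pow 2).div_const 2).sub_const (L ^ 2 / 24)
    refine h1.congr_deriv ?_
    norm_num
  -- integrability helpers
  have iIcc : ∀ {h : ℝ → ℝ}, ContinuousOn h (Icc a b) → IntervalIntegrable h volume a b := by
    intro h hh
    apply hh.intervalIntegrable_of_Icc hab'
  have igf'' : IntervalIntegrable (fun x => g x * f'' x) volume a b :=
    iIcc (hgc.continuousOn.mul hcont)
  have iff : IntervalIntegrable f volume a b := iIcc hfc
  -- Step 1: integration by parts identity
  have key : (∫ x in a..b, g x * f'' x)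
      = (∫ x in a..b, f x) - L * ((f a + f b) / 2) + L ^ 2 * (f' b - f' a) / 12 := by
    set F : ℝ → ℝ := fun x => g x * f' x - (x - c) * f x with hF
    have hFd : ∀ x ∈ Icc a b, HasDerivWithinAt F (g x * f'' x - f x) (Icc a b) x := by
      intro x hx
      have h1 : HasDerivWithinAt g (x - c) (Icc a b) x := (hgd x).hasDerivWithinAt
      have h2 : HasDerivWithinAt (fun y : ℝ => y - c) 1 (Icc a b) x :=
        ((hasDerivAt_id x).sub_const c).hasDerivWithinAt
      have h3 := (h1.mul (hf'' x hx)).sub (h2.mul (hf' x hx))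
      refine h3.congr_deriv ?_
      ring
    have hFc : ContinuousOn F (Icc a b) := fun x hx => (hFd x hx).continuousWithinAt
    have hint : IntervalIntegrable (fun x => g x * f'' x - f x) volume a b := igf''.sub iff
    have ftc : (∫ x in a..b, (g x * f'' x - f x)) = F b - F a := by
      apply integral_eq_sub_of_hasDeriv_right_of_le hab' hFc _ hint
      intro x hx
      exact ((hFd x (Ioo_subset_Icc_self hx)).hasDerivAt
        (Icc_mem_nhds hx.1 hx.2)).hasDerivWithinAt
    rw [integral_sub igf'' iff] at ftc
    have hFval : F b - F a = -(L * ((f a + f b) / 2)) + L ^ 2 * (f' b - f' a) / 12 := by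
      simp only [hF, hg, hc, hL]
      ring
    linear_combination ftc + hFval
  -- Step 2: ∫ g = 0
  have hg0 : (∫ x in a..b, g x) = 0 := by
    have hGd : ∀ x : ℝ, HasDerivAt (fun y : ℝ => (y - c) ^ 3 / 6 - L ^ 2 * y / 24) (g x) x := by
      intro x
      have h1 : HasDerivAt (fun y : ℝ => (y - c) ^ 3 / 6 - L ^ 2 * y / 24)
          ((3 * (x - c) ^ 2 * 1) / 6 - L ^ 2 * 1 / 24) x := by
        exact ((((hasDerivAt_id x).sub_const c).pow 3).div_const 6).sub
          (((hasDerivAt_id x).const_mul (L ^ 2)).div_const 24)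
      convert h1 using 1
      simp [hg]
      try ring
    rw [integral_eq_sub_of_hasDerivAt (fun x _ => hGd x) (iIcc hgc.continuousOn)]
    simp only [hc, hL]
    ring
  -- positive part
  set S : ℝ := ∫ x in a..b, max (g x) 0 with hS
  have hgp_cont : Continuous fun x => max (g x) 0 := hgc.max continuous_const
  have iSp : IntervalIntegrable (fun x => max (g x) 0) volume a b := iIcc hgp_cont.continuousOn
  have hS0 : 0 ≤ S := integral_nonneg hab' (fun x _ => le_max_right _ _)
  -- Step 3 : S ≤ 3 L^3 / 160
  have hSle : S ≤ 3 * L ^ 3 / 160 := by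
    have hPd : ∀ x : ℝ, HasDerivAt (fun y : ℝ => 3 / (2 * L ^ 2) * ((y - c) ^ 5 / 5))
        (3 / 2 * (x - c) ^ 4 / L ^ 2) x := by
      intro x
      have h1 := ((((hasDerivAt_id x).sub_const c).pow 5).div_const 5).const_mul (3 / (2 * L ^ 2))
      refine h1.congr_deriv ?_
      simp only [id]
      field_simp
      try ring
    have hPc : Continuous fun x : ℝ => 3 / 2 * (x - c) ^ 4 / L ^ 2 := by fun_prop
    have hval : (∫ x in a..b, 3 / 2 * (x - c) ^ 4 / L ^ 2) = 3 * L ^ 3 / 160 := by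
      rw [integral_eq_sub_of_hasDerivAt (fun x _ => hPd x) (iIcc hPc.continuousOn)]
      simp only [hc, hL]
      have hba : b - a ≠ 0 := (sub_pos.mpr hab).ne'
      field_simp
      ring
    rw [hS, ← hval]
    apply integral_mono_on hab' iSp (iIcc hPc.continuousOn)
    intro x _
    have hnn : (0:ℝ) ≤ 3 / 2 * (x - c) ^ 4 / L ^ 2 := by positivity
    refine max_le ?_ hnn
    simp only [hg]
    rw [le_div_iff₀ hL2]
    nlinarith [sq_nonneg ((x - c) ^ 2 - L ^ 2 / 6)]
  -- Step 4/5: bounds on the integral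
  have hgneg : ∀ x, max (g x) 0 - g x = max (-g x) 0 := by
    intro x
    rcases le_total (g x) 0 with h | h
    · rw [max_eq_right h, max_eq_left (by linarith)]; ring
    · rw [max_eq_left h, max_eq_right (by linarith)]; ring
  have iSn : IntervalIntegrable (fun x => max (g x) 0 - g x) volume a b :=
    iSp.sub (iIcc hgc.continuousOn)
  have hSn : (∫ x in a..b, (max (g x) 0 - g x)) = S := by
    rw [integral_sub iSp (iIcc hgc.continuousOn), hg0, hS]; ring
  have hupper : (∫ x in a..b, g x * f'' x) ≤ S * (M₂ - m₂) := by
    have h1 : (∫ x in a..b, g x * f'' x)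
        ≤ ∫ x in a..b, (max (g x) 0 * M₂ - (max (g x) 0 - g x) * m₂) := by
      apply integral_mono_on hab' igf''
      · exact (iSp.mul_const M₂).sub (iSn.mul_const m₂)
      · intro x hx
        rcases le_total 0 (g x) with h | h
        · rw [max_eq_left h]
          have := hM x hx
          nlinarith
        · rw [max_eq_right h]
          have := hm x hx
          nlinarith
    have h2 : (∫ x in a..b, (max (g x) 0 * M₂ - (max (g x) 0 - g x) * m₂))
        = S * M₂ - S * m₂ := by
      rw [integral_sub (iSp.mul_const M₂) (iSn.mul_const m₂),
        intervalIntegral.integral_mul_const, intervalIntegral.integral_mul_const, hSn, hS]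
    rw [h2] at h1
    linarith
  have hlower : -(S * (M₂ - m₂)) ≤ (∫ x in a..b, g x * f'' x) := by
    have h1 : (∫ x in a..b, (max (g x) 0 * m₂ - (max (g x) 0 - g x) * M₂))
        ≤ ∫ x in a..b, g x * f'' x := by
      apply integral_mono_on hab'
      · exact (iSp.mul_const m₂).sub (iSn.mul_const M₂)
      · exact igf''
      · intro x hx
        rcases le_total 0 (g x) with h | h
        · rw [max_eq_left h]
          have := hm x hx
          nlinarith
        · rw [max_eq_right h]
          have := hM x hx
          nlinarith
    have h2 : (∫ x in a..b, (max (g x) 0 * m₂ - (max (g x) 0 - g x) * M₂))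
        = S * m₂ - S * M₂ := by
      rw [integral_sub (iSp.mul_const m₂) (iSn.mul_const M₂),
        intervalIntegral.integral_mul_const, intervalIntegral.integral_mul_const, hSn, hS]
    rw [h2] at h1
    linarith
  have hmM : m₂ ≤ M₂ := by
    have ha : a ∈ Icc a b := ⟨le_refl a, hab'⟩
    exact (hm a ha).trans (hM a ha)
  rw [← key, abs_le]
  clear_value c L g S
  have h3 : (0:ℝ) ≤ M₂ - m₂ := by linarith
  have hb2 : S * (M₂ - m₂) ≤ L ^ 3 * (M₂ - m₂) / 48 := by
    have hL3 : (0:ℝ) ≤ L ^ 3 := (pow_pos hL0 3).le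
    have h4 : 3 * L ^ 3 / 160 ≤ L ^ 3 / 48 := by linarith
    calc S * (M₂ - m₂) ≤ (3 * L ^ 3 / 160) * (M₂ - m₂) :=
          mul_le_mul_of_nonneg_right hSle h3
      _ ≤ (L ^ 3 / 48) * (M₂ - m₂) := mul_le_mul_of_nonneg_right h4 h3
      _ = L ^ 3 * (M₂ - m₂) / 48 := by ring
  exact ⟨by linarith [hlower, hb2], by linarith [hupper, hb2]⟩
end

section
/- Let f ∈ C²([a,b]) with m₂ ≤ f'' ≤ M₂ on [a,b] and f'(a) = f'(b). Then |∫_a^b f(x)dx - (b-a)(f(a)+f(b))/2| ≤ (b-a)³(M₂-m₂)/48. -/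
open intervalIntegral Set

private lemma poly_int_aux (a b c0 c1 c2 c3 c4 : ℝ) :
    ∫ x in a..b, (c0 + c1*x + c2*x^2 + c3*x^3 + c4*x^4)
      = (c0*b + c1*b^2/2 + c2*b^3/3 + c3*b^4/4 + c4*b^5/5)
        - (c0*a + c1*a^2/2 + c2*a^3/3 + c3*a^4/4 + c4*a^5/5) := by
  have h : ∀ x : ℝ, HasDerivAt
      (fun y => c0*y + c1*y^2/2 + c2*y^3/3 + c3*y^4/4 + c4*y^5/5)
      (c0 + c1*x + c2*x^2 + c3*x^3 + c4*x^4) x := by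
    intro x
    have h1 : HasDerivAt (fun y : ℝ => c0*y + c1*y^2/2 + c2*y^3/3 + c3*y^4/4 + c4*y^5/5)
        (c0*1 + c1*(2*x^1)/2 + c2*(3*x^2)/3 + c3*(4*x^3)/4 + c4*(5*x^4)/5) x := by
      exact ((((hasDerivAt_id' (x := x)).const_mul c0).add
        (((hasDerivAt_pow 2 x).const_mul c1).div_const 2)).add
        (((hasDerivAt_pow 3 x).const_mul c2).div_const 3)).add
        (((hasDerivAt_pow 4 x).const_mul c3).div_const 4) |>.add
        (((hasDerivAt_pow 5 x).const_mul c4).div_const 5)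
    convert h1 using 1
    ring
  rw [integral_eq_sub_of_hasDerivAt (fun x _ => h x)]
  · exact (by fun_prop :
      Continuous fun x : ℝ => c0 + c1*x + c2*x^2 + c3*x^3 + c4*x^4).intervalIntegrable a b

set_option maxHeartbeats 800000 in
theorem periodic_trapezoid_error
    (a b m₂ M₂ : ℝ) (f f' f'' : ℝ → ℝ) (hab : a < b)
    (hf' : ∀ x ∈ Set.Icc a b, HasDerivWithinAt f (f' x) (Set.Icc a b) x)
    (hf'' : ∀ x ∈ Set.Icc a b, HasDerivWithinAt f' (f'' x) (Set.Icc a b) x)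
    (hcont : ContinuousOn f'' (Set.Icc a b))
    (hm : ∀ x ∈ Set.Icc a b, m₂ ≤ f'' x)
    (hM : ∀ x ∈ Set.Icc a b, f'' x ≤ M₂)
    (hper : f' a = f' b) :
    |(∫ x in a..b, f x) - (b - a) * ((f a + f b) / 2)|
      ≤ (b - a) ^ 3 * (M₂ - m₂) / 48 := by
  set K : ℝ → ℝ := fun x => (x-a)*(b-x)/2 - (b-a)^2/12 with hKdef
  set Φ : ℝ → ℝ := fun x => K x * f' x - ((a+b-2*x)/2) * f x with hΦdef
  have hK : ∀ x : ℝ, HasDerivAt K ((a+b-2*x)/2) x := by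
    intro x
    have h1 : HasDerivAt (fun y : ℝ => (y-a)*(b-y)/2 - (b-a)^2/12)
        ((1 * (b-x) + (x-a) * (0-1))/2 - 0) x := by
      exact ((((hasDerivAt_id' (x := x)).sub_const a).mul
        ((hasDerivAt_const x b).sub (hasDerivAt_id' (x := x)))).div_const 2).sub
        (hasDerivAt_const x ((b-a)^2/12))
    convert h1 using 1
    ring
  have hK' : ∀ x : ℝ, HasDerivAt (fun y : ℝ => (a+b-2*y)/2) (-1) x := by
    intro x
    have h1 : HasDerivAt (fun y : ℝ => (a+b-2*y)/2) ((0 - 2*1)/2) x :=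
      (((hasDerivAt_const x (a+b)).sub ((hasDerivAt_id' (x := x)).const_mul 2)).div_const 2)
    convert h1 using 1
    norm_num
  have hΦderiv : ∀ x ∈ Set.Icc a b, HasDerivWithinAt Φ (K x * f'' x + f x) (Set.Icc a b) x := by
    intro x hx
    have h1 : HasDerivWithinAt Φ
        (((a+b-2*x)/2) * f' x + K x * f'' x - ((-1) * f x + ((a+b-2*x)/2) * f' x))
        (Set.Icc a b) x :=
      ((hK x).hasDerivWithinAt.mul (hf'' x hx)).sub
        ((hK' x).hasDerivWithinAt.mul (hf' x hx))
    convert h1 using 1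
    ring
  have hfc : ContinuousOn f (Set.Icc a b) := fun x hx => (hf' x hx).continuousWithinAt
  have hf'c : ContinuousOn f' (Set.Icc a b) := fun x hx => (hf'' x hx).continuousWithinAt
  have hKc : Continuous K := by fun_prop
  have hintKf'' : IntervalIntegrable (fun x => K x * f'' x) MeasureTheory.volume a b := by
    apply ContinuousOn.intervalIntegrable
    rw [Set.uIcc_of_le hab.le]
    exact hKc.continuousOn.mul hcont
  have hintf : IntervalIntegrable f MeasureTheory.volume a b := by
    apply ContinuousOn.intervalIntegrable
    rw [Set.uIcc_of_le hab.le]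
    exact hfc
  have hint : IntervalIntegrable (fun x => K x * f'' x + f x) MeasureTheory.volume a b :=
    hintKf''.add hintf
  have hΦc : ContinuousOn Φ (Set.Icc a b) :=
    ((hKc.continuousOn.mul hf'c).sub
      ((by fun_prop : Continuous fun x : ℝ => (a+b-2*x)/2).continuousOn.mul hfc))
  have hident : (∫ x in a..b, (K x * f'' x + f x)) = Φ b - Φ a :=
    integral_eq_sub_of_hasDeriv_right_of_le hab.le hΦc
      (fun x hx => ((hΦderiv x (Set.mem_Icc.2 ⟨hx.1.le, hx.2.le⟩)).hasDerivAt
        (Icc_mem_nhds hx.1 hx.2)).hasDerivWithinAt) hint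
  have hKa : K a = -(b-a)^2/12 := by simp [hKdef]; ring
  have hKb : K b = -(b-a)^2/12 := by simp [hKdef]; ring
  have hΦval : Φ b - Φ a = (b - a) * ((f a + f b) / 2) := by
    simp only [hΦdef, hKa, hKb]
    rw [← hper]
    ring
  rw [intervalIntegral.integral_add hintKf'' hintf] at hident
  -- the error equals -∫ K f''
  have hE : (∫ x in a..b, f x) - (b - a) * ((f a + f b) / 2)
      = -∫ x in a..b, K x * f'' x := by
    rw [← hΦval]; linarith [hident]
  -- ∫ K = 0
  have hK0 : (∫ x in a..b, K x) = 0 := by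
    have h1 : (∫ x in a..b, K x) = ∫ x in a..b,
        ((-a*b/2 - (b-a)^2/12) + ((a+b)/2)*x + (-(1:ℝ)/2)*x^2 + 0*x^3 + 0*x^4) := by
      apply intervalIntegral.integral_congr
      intro x _
      simp [hKdef]; ring
    rw [h1, poly_int_aux]; ring
  -- ∫ K² = (b-a)^5/720
  have hK2 : (∫ x in a..b, (K x)^2) = (b-a)^5/720 := by
    have h1 : (∫ x in a..b, (K x)^2) = ∫ x in a..b,
        (((-a*b/2 - (b-a)^2/12))^2 + (2*(-a*b/2 - (b-a)^2/12)*((a+b)/2))*x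
          + (((a+b)/2)^2 + 2*(-a*b/2 - (b-a)^2/12)*(-(1:ℝ)/2))*x^2
          + (2*((a+b)/2)*(-(1:ℝ)/2))*x^3 + ((-(1:ℝ)/2)^2)*x^4) := by
      apply intervalIntegral.integral_congr
      intro x _
      simp [hKdef]; ring
    rw [h1, poly_int_aux]; ring
  set μ : ℝ := (m₂ + M₂)/2 with hμdef
  set D : ℝ := M₂ - m₂ with hDdef
  have hD : 0 ≤ D := by
    have h1 := hm a ⟨le_refl a, hab.le⟩
    have h2 := hM a ⟨le_refl a, hab.le⟩
    simp only [hDdef]; linarith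
  have hintKμ : IntervalIntegrable (fun x => K x * (f'' x - μ)) MeasureTheory.volume a b := by
    apply ContinuousOn.intervalIntegrable
    rw [Set.uIcc_of_le hab.le]
    exact hKc.continuousOn.mul (hcont.sub continuousOn_const)
  have hintK : IntervalIntegrable K MeasureTheory.volume a b :=
    hKc.intervalIntegrable a b
  -- ∫ K (f'' - μ) = ∫ K f''
  have hsplit : (∫ x in a..b, K x * (f'' x - μ)) = ∫ x in a..b, K x * f'' x := by
    have h1 : (∫ x in a..b, K x * (f'' x - μ))
        = (∫ x in a..b, K x * f'' x) - ∫ x in a..b, μ * K x := by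
      rw [← intervalIntegral.integral_sub hintKf''
        (show IntervalIntegrable (fun x => μ * K x) MeasureTheory.volume a b from
          (continuous_const.mul hKc).intervalIntegrable a b)]
      apply intervalIntegral.integral_congr
      intro x _; ring
    rw [h1, intervalIntegral.integral_const_mul, hK0]
    ring
  -- pointwise bound
  set B : ℝ → ℝ := fun x => D/2 * (27/(2*(b-a)^2) * (K x)^2 + (b-a)^2/54) with hBdef
  have hintabs : IntervalIntegrable (fun x => |K x * (f'' x - μ)|) MeasureTheory.volume a b := by
    apply ContinuousOn.intervalIntegrable
    rw [Set.uIcc_of_le hab.le]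
    exact (hKc.continuousOn.mul (hcont.sub continuousOn_const)).abs
  have hintB : IntervalIntegrable B MeasureTheory.volume a b := by
    apply Continuous.intervalIntegrable
    fun_prop
  have hptwise : ∀ x ∈ Set.Icc a b, |K x * (f'' x - μ)| ≤ B x := by
    intro x hx
    have hba : (0:ℝ) < b - a := sub_pos.2 hab
    have hs : (0:ℝ) < (b-a)^2 := by positivity
    have h1 : |f'' x - μ| ≤ D/2 := by
      rw [abs_le]
      constructor
      · have := hm x hx; simp only [hμdef, hDdef]; linarith
      · have := hM x hx; simp only [hμdef, hDdef]; linarith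
    have h2 : |K x| ≤ 27/(2*(b-a)^2) * (K x)^2 + (b-a)^2/54 := by
      have h2' : 54*(b-a)^2*|K x| ≤ 729*(K x)^2 + ((b-a)^2)^2 := by
        nlinarith [sq_nonneg (27*|K x| - (b-a)^2), sq_abs (K x)]
      rw [show 27/(2*(b-a)^2) * (K x)^2 + (b-a)^2/54
          = (729*(K x)^2 + ((b-a)^2)^2)/(54*(b-a)^2) from by field_simp; ring]
      rw [le_div_iff₀ (by positivity)]
      nlinarith [h2']
    calc |K x * (f'' x - μ)| = |K x| * |f'' x - μ| := abs_mul _ _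
      _ ≤ |K x| * (D/2) := by
          exact mul_le_mul_of_nonneg_left h1 (abs_nonneg _)
      _ ≤ (27/(2*(b-a)^2) * (K x)^2 + (b-a)^2/54) * (D/2) := by
          exact mul_le_mul_of_nonneg_right h2 (by linarith)
      _ = B x := by simp only [hBdef]; ring
  -- integrate
  have hBint : (∫ x in a..b, B x)
      = D/2 * (27/(2*(b-a)^2) * ((b-a)^5/720) + (b-a) * ((b-a)^2/54)) := by
    have h1 : (∫ x in a..b, B x)
        = ∫ x in a..b, (D/2 * (27/(2*(b-a)^2)) * (K x)^2 + D/2 * ((b-a)^2/54)) := by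
      apply intervalIntegral.integral_congr
      intro x _; simp only [hBdef]; ring
    rw [h1, intervalIntegral.integral_add, intervalIntegral.integral_const_mul,
      intervalIntegral.integral_const, hK2]
    · simp only [smul_eq_mul]; ring
    · exact Continuous.intervalIntegrable (by fun_prop) a b
    · exact intervalIntegrable_const
  have hchain : |(∫ x in a..b, f x) - (b - a) * ((f a + f b) / 2)|
      ≤ D/2 * (27/(2*(b-a)^2) * ((b-a)^5/720) + (b-a) * ((b-a)^2/54)) := by
    rw [hE, abs_neg, ← hsplit]
    calc |∫ x in a..b, K x * (f'' x - μ)|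
        ≤ ∫ x in a..b, |K x * (f'' x - μ)| :=
          intervalIntegral.abs_integral_le_integral_abs hab.le
      _ ≤ ∫ x in a..b, B x :=
          intervalIntegral.integral_mono_on hab.le hintabs hintB hptwise
      _ = _ := hBint
  refine hchain.trans ?_
  have hba : (0:ℝ) < b - a := sub_pos.2 hab
  have hs : (0:ℝ) < (b-a)^2 := by positivity
  have h3 : (0:ℝ) < (b-a)^3 := by positivity
  have h5 : 27/(2*(b-a)^2) * ((b-a)^5/720) = 27*(b-a)^3/1440 := by
    field_simp
    ring
  rw [h5]
  have : (b - a)^3 * D / 48 = D * (b-a)^3 / 48 := by ring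
  rw [show (b - a) ^ 3 * (M₂ - m₂) / 48 = D * (b-a)^3/48 from by simp only [hDdef]; ring]
  nlinarith [mul_nonneg hD h3.le]
end

section
/- Let f ∈ C²([a,b]) with m₁ ≤ f' ≤ M₁ and m₂ ≤ f'' ≤ M₂ on [a,b], and n ≥ 1. Define ε = [f(b) - f(a)]/(b-a) - [ f'(a)/(2n) + (1/n)∑_{k=1}^{n} f'(a + k(b-a)/n) ]. Then (b-a)(m₂-M₂)/(8n) - M₁/(2n) ≤ ε ≤ (b-a)(M₂-m₂)/(8n) - m₁/(2n). -/
private lemma mono_aux {G g : ℝ → ℝ} {c d : ℝ} (hcd : c ≤ d)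
    (hG : ∀ x ∈ Set.Icc c d, HasDerivWithinAt G (g x) (Set.Icc c d) x)
    (hg : ∀ x ∈ Set.Icc c d, 0 ≤ g x) : G c ≤ G d := by
  have hcont : ContinuousOn G (Set.Icc c d) := fun x hx => (hG x hx).continuousWithinAt
  exact monotoneOn_of_hasDerivWithinAt_nonneg (convex_Icc c d) hcont
    (fun x hx => ((hG x (interior_subset hx)).mono interior_subset))
    (fun x hx => hg x (interior_subset hx))
    (Set.left_mem_Icc.2 hcd) (Set.right_mem_Icc.2 hcd) hcd

private lemma Gderiv {a b : ℝ} {f f' f'' : ℝ → ℝ}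
    (hf' : ∀ x ∈ Set.Icc a b, HasDerivWithinAt f (f' x) (Set.Icc a b) x)
    (hf'' : ∀ x ∈ Set.Icc a b, HasDerivWithinAt f' (f'' x) (Set.Icc a b) x)
    (t m : ℝ) {s : Set ℝ} (hs : s ⊆ Set.Icc a b) {x : ℝ} (hx : x ∈ s) :
    HasDerivWithinAt (fun y => f y - (y - m) * f' y + t * (y - m)^2 / 2)
      ((m - x) * (f'' x - t)) s x := by
  have h1 : HasDerivWithinAt (fun y : ℝ => y - m) 1 s x :=
    (hasDerivWithinAt_id x s).sub_const m
  have h2 := ((hf' x (hs hx)).mono hs)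
  have h3 := ((hf'' x (hs hx)).mono hs)
  have h4 : HasDerivWithinAt (fun y => (y - m) * f' y) (1 * f' x + (x - m) * f'' x) s x :=
    h1.mul h3
  have h5 : HasDerivWithinAt (fun y : ℝ => t * (y - m)^2 / 2) (t * (2 * (x - m)^1 * 1) / 2) s x :=
    ((h1.pow 2).const_mul t).div_const 2
  have := (h2.sub h4).add h5
  refine this.congr_deriv ?_
  ring

private lemma interval_bound {a b m₂ M₂ : ℝ} {f f' f'' : ℝ → ℝ}
    (hf' : ∀ x ∈ Set.Icc a b, HasDerivWithinAt f (f' x) (Set.Icc a b) x)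
    (hf'' : ∀ x ∈ Set.Icc a b, HasDerivWithinAt f' (f'' x) (Set.Icc a b) x)
    (hm2 : ∀ x ∈ Set.Icc a b, m₂ ≤ f'' x)
    (hM2 : ∀ x ∈ Set.Icc a b, f'' x ≤ M₂)
    {c d : ℝ} (hcd : c ≤ d) (hsub : Set.Icc c d ⊆ Set.Icc a b) :
    (m₂ - M₂) * (d - c)^2 / 8 ≤ f d - f c - (d - c)/2 * (f' c + f' d) ∧
      f d - f c - (d - c)/2 * (f' c + f' d) ≤ (M₂ - m₂) * (d - c)^2 / 8 := by
  set m : ℝ := (c + d) / 2 with hm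
  have hcm : c ≤ m := by simp [hm]; linarith
  have hmd : m ≤ d := by simp [hm]; linarith
  have hs1 : Set.Icc c m ⊆ Set.Icc a b :=
    (Set.Icc_subset_Icc le_rfl hmd).trans hsub
  have hs2 : Set.Icc m d ⊆ Set.Icc a b :=
    (Set.Icc_subset_Icc hcm le_rfl).trans hsub
  -- A : G_{m₂} c ≤ G_{m₂} m  on [c,m]
  have A : (fun y => f y - (y - m) * f' y + m₂ * (y - m)^2 / 2) c
      ≤ (fun y => f y - (y - m) * f' y + m₂ * (y - m)^2 / 2) m := by
    refine mono_aux hcm (fun x hx => Gderiv hf' hf'' m₂ m hs1 hx) (fun x hx => ?_)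
    have h1 : x ≤ m := hx.2
    have h2 := hm2 x (hs1 hx)
    nlinarith
  -- B : G_{M₂} m ≤ G_{M₂} d  on [m,d]
  have B : (fun y => f y - (y - m) * f' y + M₂ * (y - m)^2 / 2) m
      ≤ (fun y => f y - (y - m) * f' y + M₂ * (y - m)^2 / 2) d := by
    refine mono_aux hmd (fun x hx => Gderiv hf' hf'' M₂ m hs2 hx) (fun x hx => ?_)
    have h1 : m ≤ x := hx.1
    have h2 := hM2 x (hs2 hx)
    nlinarith
  -- C : G_{M₂} m ≤ G_{M₂} c  on [c,m]  (antitone)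
  have C : (fun y => f y - (y - m) * f' y + M₂ * (y - m)^2 / 2) m
      ≤ (fun y => f y - (y - m) * f' y + M₂ * (y - m)^2 / 2) c := by
    have := mono_aux hcm
      (g := fun x => -((m - x) * (f'' x - M₂)))
      (G := fun y => -(f y - (y - m) * f' y + M₂ * (y - m)^2 / 2))
      (fun x hx => (Gderiv hf' hf'' M₂ m hs1 hx).neg)
      (fun x hx => by
        have h1 : x ≤ m := hx.2
        have h2 := hM2 x (hs1 hx)
        show (0:ℝ) ≤ -((m - x) * (f'' x - M₂))
        nlinarith)
    simpa only [neg_le_neg_iff] using this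
  -- D : G_{m₂} d ≤ G_{m₂} m  on [m,d]  (antitone)
  have D : (fun y => f y - (y - m) * f' y + m₂ * (y - m)^2 / 2) d
      ≤ (fun y => f y - (y - m) * f' y + m₂ * (y - m)^2 / 2) m := by
    have := mono_aux hmd
      (g := fun x => -((m - x) * (f'' x - m₂)))
      (G := fun y => -(f y - (y - m) * f' y + m₂ * (y - m)^2 / 2))
      (fun x hx => (Gderiv hf' hf'' m₂ m hs2 hx).neg)
      (fun x hx => by
        have h1 : m ≤ x := hx.1
        have h2 := hm2 x (hs2 hx)
        show (0:ℝ) ≤ -((m - x) * (f'' x - m₂))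
        nlinarith)
    simpa only [neg_le_neg_iff] using this
  simp only at A B C D
  rw [hm] at A B C D
  constructor
  · linarith [A, B]
  · linarith [C, D]

theorem taylor_like_without_closure
    (a b m₁ M₁ m₂ M₂ : ℝ) (f f' f'' : ℝ → ℝ) (hab : a < b) (n : ℕ) (hn : 1 ≤ n)
    (hf' : ∀ x ∈ Set.Icc a b, HasDerivWithinAt f (f' x) (Set.Icc a b) x)
    (hf'' : ∀ x ∈ Set.Icc a b, HasDerivWithinAt f' (f'' x) (Set.Icc a b) x)
    (hcont : ContinuousOn f'' (Set.Icc a b))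
    (hm1 : ∀ x ∈ Set.Icc a b, m₁ ≤ f' x)
    (hM1 : ∀ x ∈ Set.Icc a b, f' x ≤ M₁)
    (hm2 : ∀ x ∈ Set.Icc a b, m₂ ≤ f'' x)
    (hM2 : ∀ x ∈ Set.Icc a b, f'' x ≤ M₂) :
    (b - a) * (m₂ - M₂) / (8 * n) - M₁ / (2 * n)
      ≤ (f b - f a) / (b - a)
          - (f' a / (2 * n) + (1 / n) * ∑ k ∈ Finset.Icc 1 n, f' (a + k * (b - a) / n))
    ∧ (f b - f a) / (b - a)
        - (f' a / (2 * n) + (1 / n) * ∑ k ∈ Finset.Icc 1 n, f' (a + k * (b - a) / n))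
      ≤ (b - a) * (M₂ - m₂) / (8 * n) - m₁ / (2 * n) := by
  have hn0 : (0:ℝ) < n := by positivity
  have hnne : (n:ℝ) ≠ 0 := ne_of_gt hn0
  set h : ℝ := (b - a) / n with hh
  have hh0 : 0 < h := div_pos (by linarith) hn0
  set x : ℕ → ℝ := fun j => a + j * (b - a) / n with hxdef
  have hx0 : x 0 = a := by simp [hxdef]
  have hxn : x n = b := by simp only [hxdef]; field_simp; ring
  have hstep : ∀ j : ℕ, x (j+1) = x j + h := by
    intro j
    simp only [hxdef, hh]
    push_cast
    ring
  have hxmem : ∀ j : ℕ, j ≤ n → x j ∈ Set.Icc a b := by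
    intro j hj
    have hj' : (j:ℝ) ≤ n := by exact_mod_cast hj
    constructor
    · simp only [hxdef]
      have : 0 ≤ (j:ℝ) * (b-a) / n :=
        div_nonneg (mul_nonneg (Nat.cast_nonneg j) (by linarith)) (le_of_lt hn0)
      linarith
    · simp only [hxdef]
      have : (j:ℝ) * (b-a) / n ≤ b - a := by
        rw [div_le_iff₀ hn0]
        nlinarith [sub_pos.2 hab]
      linarith
  -- per-interval bounds
  have key : ∀ j ∈ Finset.range n,
      (m₂ - M₂) * h^2 / 8 ≤ f (x (j+1)) - f (x j) - h/2 * (f' (x j) + f' (x (j+1))) ∧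
      f (x (j+1)) - f (x j) - h/2 * (f' (x j) + f' (x (j+1))) ≤ (M₂ - m₂) * h^2 / 8 := by
    intro j hj
    rw [Finset.mem_range] at hj
    have h1 := hxmem j (le_of_lt hj)
    have h2 := hxmem (j+1) hj
    have hcd : x j ≤ x (j+1) := by rw [hstep]; linarith
    have hsub : Set.Icc (x j) (x (j+1)) ⊆ Set.Icc a b :=
      Set.Icc_subset_Icc h1.1 h2.2
    have := interval_bound hf' hf'' hm2 hM2 hcd hsub
    have hd : x (j+1) - x j = h := by rw [hstep]; ring
    rw [hd] at this
    exact this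
  set E : ℕ → ℝ := fun j => f (x (j+1)) - f (x j) - h/2 * (f' (x j) + f' (x (j+1))) with hE
  have Slo : (n:ℝ) * ((m₂ - M₂) * h^2 / 8) ≤ ∑ j ∈ Finset.range n, E j := by
    calc (n:ℝ) * ((m₂ - M₂) * h^2 / 8) = ∑ _j ∈ Finset.range n, (m₂ - M₂) * h^2 / 8 := by
          simp [mul_comm]
      _ ≤ _ := Finset.sum_le_sum (fun j hj => (key j hj).1)
  have Shi : ∑ j ∈ Finset.range n, E j ≤ (n:ℝ) * ((M₂ - m₂) * h^2 / 8) := by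
    calc ∑ j ∈ Finset.range n, E j ≤ ∑ _j ∈ Finset.range n, (M₂ - m₂) * h^2 / 8 :=
          Finset.sum_le_sum (fun j hj => (key j hj).2)
      _ = _ := by simp [mul_comm]
  set T : ℝ := ∑ k ∈ Finset.Icc 1 n, f' (a + k * (b - a) / n) with hT
  have hTx : T = ∑ j ∈ Finset.range n, f' (x (j+1)) := by
    rw [hT, ← Finset.Ico_add_one_right_eq_Icc, Finset.sum_Ico_eq_sum_range]
    simp only [Nat.add_sub_cancel, hxdef]
    exact Finset.sum_congr rfl (fun j _ => by rw [add_comm 1 j])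
  have hsum1 : ∑ j ∈ Finset.range n, (f (x (j+1)) - f (x j)) = f b - f a := by
    rw [Finset.sum_range_sub (fun j => f (x j)), hx0, hxn]
  have hshift : ∑ j ∈ Finset.range n, f' (x j) = f' a + T - f' b := by
    have e1 : ∑ j ∈ Finset.range (n+1), f' (x j)
        = ∑ j ∈ Finset.range n, f' (x j) + f' (x n) := Finset.sum_range_succ _ n
    have e2 : ∑ j ∈ Finset.range (n+1), f' (x j)
        = ∑ j ∈ Finset.range n, f' (x (j+1)) + f' (x 0) := Finset.sum_range_succ' _ n
    rw [hx0] at e2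
    rw [hxn] at e1
    rw [hTx]
    linarith
  have hSval : ∑ j ∈ Finset.range n, E j
      = f b - f a - h/2 * f' a - h * T + h/2 * f' b := by
    simp only [hE]
    rw [Finset.sum_sub_distrib, hsum1, ← Finset.mul_sum, Finset.sum_add_distrib, hshift, ← hTx]
    ring
  have hfb1 : m₁ ≤ f' b := hm1 b (Set.right_mem_Icc.2 (le_of_lt hab))
  have hfb2 : f' b ≤ M₁ := hM1 b (Set.right_mem_Icc.2 (le_of_lt hab))
  have hba : b - a = n * h := by rw [hh]; field_simp
  have hba0 : (0:ℝ) < b - a := by linarith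
  -- key identity
  have hid : (f b - f a) / (b - a) - (f' a / (2 * n) + (1 / n) * T)
      = ((∑ j ∈ Finset.range n, E j) - h/2 * f' b) / (b - a) := by
    rw [hSval, hba]
    field_simp
    ring
  rw [hid]
  have c1 : (n:ℝ) * ((m₂ - M₂) * h^2 / 8) / (b - a) = (b - a) * (m₂ - M₂) / (8 * n) := by
    rw [hba]; field_simp
  have c2 : (n:ℝ) * ((M₂ - m₂) * h^2 / 8) / (b - a) = (b - a) * (M₂ - m₂) / (8 * n) := by
    rw [hba]; field_simp
  have c3 : (h/2 * f' b) / (b - a) = f' b / (2 * n) := by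
    rw [hba, hh]; field_simp
  rw [sub_div, c3]
  constructor
  · have hS1 : (b - a) * (m₂ - M₂) / (8 * n) ≤ (∑ j ∈ Finset.range n, E j) / (b - a) := by
      rw [← c1]
      exact div_le_div_of_nonneg_right Slo hba0.le
    have hfb : f' b / (2 * n) ≤ M₁ / (2 * n) := by
      apply div_le_div_of_nonneg_right hfb2
      positivity
    linarith
  · have hS2 : (∑ j ∈ Finset.range n, E j) / (b - a) ≤ (b - a) * (M₂ - m₂) / (8 * n) := by
      rw [← c2]
      exact div_le_div_of_nonneg_right Shi hba0.le
    have hfb : m₁ / (2 * n) ≤ f' b / (2 * n) := by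
      apply div_le_div_of_nonneg_right hfb1
      positivity
    linarith
end

section
/- Let f ∈ C²([a,b]) with m₂ ≤ f'' ≤ M₂ on [a,b]. Then for x ∈ [a,b]: (b-a)(m₂-M₂)/32 · 4(b-x)(x-a)/(b-a) ≤ f(x) - Π*(f)(x) ≤ (b-a)(M₂-m₂)/32 · 4(b-x)(x-a)/(b-a), i.e. |f(x) - Π*(f)(x)| ≤ (b-x)(x-a)(M₂-m₂)/8, where Π*(f)(x) = Π(f)(x) - ((f'(b)-f'(a))/(2(b-a)))(b-x)(x-a). -/
set_option maxHeartbeats 1000000 in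
theorem key_upper
    (a b m₂ M₂ : ℝ) (f f' f'' : ℝ → ℝ) (hab : a < b)
    (hf' : ∀ x ∈ Set.Icc a b, HasDerivWithinAt f (f' x) (Set.Icc a b) x)
    (hf'' : ∀ x ∈ Set.Icc a b, HasDerivWithinAt f' (f'' x) (Set.Icc a b) x)
    (hcont : ContinuousOn f'' (Set.Icc a b))
    (hm : ∀ x ∈ Set.Icc a b, m₂ ≤ f'' x)
    (hM : ∀ x ∈ Set.Icc a b, f'' x ≤ M₂)
    (x : ℝ) (hx : x ∈ Set.Icc a b) :
    f x - ((f a * (x - b) / (a - b) + f b * (x - a) / (b - a))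
        - ((f' b - f' a) / (2 * (b - a))) * (b - x) * (x - a))
      ≤ (b - x) * (x - a) * (M₂ - m₂) / 8 := by
  obtain ⟨hax, hxb⟩ := hx
  have hL : (0:ℝ) < b - a := by linarith
  have hL' : b - a ≠ 0 := ne_of_gt hL
  have hab' : a - b ≠ 0 := by intro h; apply hL'; linarith
  set c₀ : ℝ := (f' b - f' a) / (b - a) with hc₀
  set g : ℝ → ℝ := fun t => f t - (f a * (t - b) / (a - b) + f b * (t - a) / (b - a))
      + c₀ / 2 * ((b - t) * (t - a)) with hgdef
  set g1 : ℝ → ℝ := fun t => f' t - (f a / (a - b) + f b / (b - a))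
      + c₀ / 2 * (a + b - 2 * t) with hg1def
  have hg' : ∀ t ∈ Set.Icc a b, HasDerivWithinAt g (g1 t) (Set.Icc a b) t := by
    intro t ht
    have d1 : HasDerivAt (fun u : ℝ => f a * (u - b) / (a - b) + f b * (u - a) / (b - a))
        (f a * 1 / (a - b) + f b * 1 / (b - a)) t :=
      ((((hasDerivAt_id t).sub_const b).const_mul (f a)).div_const (a - b)).add
        ((((hasDerivAt_id t).sub_const a).const_mul (f b)).div_const (b - a))
    have d2 : HasDerivAt (fun u : ℝ => c₀ / 2 * ((b - u) * (u - a)))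
        (c₀ / 2 * ((0 - 1) * (t - a) + (b - t) * 1)) t :=
      ((((hasDerivAt_const t b).sub (hasDerivAt_id t)).mul
        ((hasDerivAt_id t).sub_const a))).const_mul (c₀ / 2)
    have h := ((hf' t ht).sub d1.hasDerivWithinAt).add d2.hasDerivWithinAt
    refine h.congr_deriv ?_
    simp only [hg1def]
    ring
  have hg1' : ∀ t ∈ Set.Icc a b, HasDerivWithinAt g1 (f'' t - c₀) (Set.Icc a b) t := by
    intro t ht
    have d2 : HasDerivAt (fun u : ℝ => c₀ / 2 * (a + b - 2 * u)) (c₀ / 2 * (0 - 2 * 1)) t :=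
      ((hasDerivAt_const t (a + b)).sub ((hasDerivAt_id t).const_mul 2)).const_mul (c₀ / 2)
    have h := ((hf'' t ht).sub_const (f a / (a - b) + f b / (b - a))).add d2.hasDerivWithinAt
    refine h.congr_deriv ?_
    ring
  have hgc : ContinuousOn g (Set.Icc a b) := fun t ht => (hg' t ht).continuousWithinAt
  have hg1c : ContinuousOn g1 (Set.Icc a b) := fun t ht => (hg1' t ht).continuousWithinAt
  have hga : g a = 0 := by simp only [hgdef]; field_simp; ring
  have hgb : g b = 0 := by simp only [hgdef]; field_simp; ring
  have hg1ab : g1 b = g1 a := by simp only [hg1def, hc₀]; field_simp; ring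
  -- c₀ lies between m₂ and M₂ (mean value theorem for f')
  have hcontf' : ContinuousOn f' (Set.Icc a b) := fun t ht => (hf'' t ht).continuousWithinAt
  have hdf' : ∀ t ∈ Set.Ioo a b, HasDerivAt f' (f'' t) t := fun t ht =>
    (hf'' t (Set.Ioo_subset_Icc_self ht)).hasDerivAt (Icc_mem_nhds ht.1 ht.2)
  obtain ⟨ξ, hξ, hξeq⟩ := exists_hasDerivAt_eq_slope f' f'' hab hcontf' hdf'
  have hc₀m : m₂ ≤ c₀ := by rw [hc₀, ← hξeq]; exact hm ξ (Set.Ioo_subset_Icc_self hξ)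
  have hc₀M : c₀ ≤ M₂ := by rw [hc₀, ← hξeq]; exact hM ξ (Set.Ioo_subset_Icc_self hξ)
  -- FTC helper
  have ftc : ∀ (α β p q : ℝ), a ≤ p → p ≤ q → q ≤ b →
      ∫ t in p..q, (α + β * t) * (f'' t - c₀)
        = ((α + β * q) * g1 q - β * g q) - ((α + β * p) * g1 p - β * g p) := by
    intro α β p q hap hpq hqb
    have hsub : Set.Icc p q ⊆ Set.Icc a b := Set.Icc_subset_Icc hap hqb
    have hsub' : Set.uIcc p q ⊆ Set.Icc a b := by
      rw [Set.uIcc_of_le hpq]; exact hsub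
    apply intervalIntegral.integral_eq_sub_of_hasDeriv_right_of_le hpq
    · exact ((continuousOn_const.add (continuousOn_const.mul continuousOn_id)).mul
        (hg1c.mono hsub)).sub (continuousOn_const.mul (hgc.mono hsub))
    · intro t ht
      have ht' : t ∈ Set.Ioo a b := ⟨lt_of_le_of_lt hap ht.1, lt_of_lt_of_le ht.2 hqb⟩
      have htm : Set.Icc a b ∈ nhds t := Icc_mem_nhds ht'.1 ht'.2
      have hgd : HasDerivAt g (g1 t) t := (hg' t (Set.Ioo_subset_Icc_self ht')).hasDerivAt htm
      have hg1d : HasDerivAt g1 (f'' t - c₀) t := (hg1' t (Set.Ioo_subset_Icc_self ht')).hasDerivAt htm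
      have dlin : HasDerivAt (fun u : ℝ => α + β * u) β t := by
        simpa using ((hasDerivAt_id t).const_mul β).const_add α
      have h1 : HasDerivAt (fun u => (α + β * u) * g1 u - β * g u)
          (β * g1 t + (α + β * t) * (f'' t - c₀) - β * g1 t) t := (dlin.mul hg1d).sub (hgd.const_mul β)
      have h2 : HasDerivAt (fun u => (α + β * u) * g1 u - β * g u)
          ((α + β * t) * (f'' t - c₀)) t := by convert h1 using 1; ring
      exact h2.hasDerivWithinAt
    · exact ((continuousOn_const.add (continuousOn_const.mul continuousOn_id)).mul
        ((hcont.mono hsub').sub continuousOn_const)).intervalIntegrable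
  -- integrability helper
  have integ : ∀ (α β p q : ℝ), a ≤ p → p ≤ q → q ≤ b →
      IntervalIntegrable (fun t => (α + β * t) * (f'' t - c₀)) MeasureTheory.volume p q := by
    intro α β p q hap hpq hqb
    have hsub' : Set.uIcc p q ⊆ Set.Icc a b := by
      rw [Set.uIcc_of_le hpq]; exact Set.Icc_subset_Icc hap hqb
    exact ((continuousOn_const.add (continuousOn_const.mul continuousOn_id)).mul
        ((hcont.mono hsub').sub continuousOn_const)).intervalIntegrable
  -- linear integral computation
  have lint : ∀ (σ α β p q : ℝ), (∫ t in p..q, σ * (α + β * t))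
      = σ * (α * (q - p) + β * ((q ^ 2 - p ^ 2) / 2)) := by
    intro σ α β p q
    rw [intervalIntegral.integral_const_mul]
    have h1 : (∫ t in p..q, (α + β * t))
        = (∫ t in p..q, (α : ℝ)) + ∫ t in p..q, β * t :=
      intervalIntegral.integral_add intervalIntegrable_const
        ((continuous_const.mul continuous_id).intervalIntegrable p q)
    rw [h1, intervalIntegral.integral_const, intervalIntegral.integral_const_mul, integral_id]
    rw [smul_eq_mul]; ring
  -- main parameters
  obtain ⟨ν, hνdef⟩ : ∃ y : ℝ, y = M₂ - c₀ := ⟨_, rfl⟩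
  obtain ⟨μ, hμdef⟩ : ∃ y : ℝ, y = m₂ - c₀ := ⟨_, rfl⟩
  have hν : 0 ≤ ν := by rw [hνdef]; linarith
  have hμ : μ ≤ 0 := by rw [hμdef]; linarith
  obtain ⟨D, hDdef⟩ : ∃ y : ℝ, y = M₂ - m₂ := ⟨_, rfl⟩
  have hD : 0 ≤ D := by rw [hDdef]; linarith
  have hDνμ : D = ν - μ := by rw [hDdef, hνdef, hμdef]; ring
  obtain ⟨θ, hθdef⟩ : ∃ y : ℝ, y = if D = 0 then 0 else -μ / D := ⟨_, rfl⟩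
  have hθD : θ * D = -μ := by
    by_cases h : D = 0
    · rw [hθdef, if_pos h, zero_mul]
      have : μ = 0 := by rw [hμdef]; rw [hDdef] at h; linarith
      rw [this]; ring
    · rw [hθdef, if_neg h]; field_simp
  have hDpos : D ≠ 0 → 0 < D := fun h => lt_of_le_of_ne hD (Ne.symm h)
  have hθ0 : 0 ≤ θ := by
    by_cases h : D = 0
    · rw [hθdef, if_pos h]
    · rw [hθdef, if_neg h]
      exact div_nonneg (by linarith) (hDpos h).le
  have hθ1 : θ ≤ 1 := by
    by_cases h : D = 0
    · rw [hθdef, if_pos h]; norm_num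
    · rw [hθdef, if_neg h, div_le_one (hDpos h)]
      rw [hμdef, hDdef]; linarith
  obtain ⟨t₁, ht₁def⟩ : ∃ y : ℝ, y = a + θ * (x - a) := ⟨_, rfl⟩
  obtain ⟨t₂, ht₂def⟩ : ∃ y : ℝ, y = b - θ * (b - x) := ⟨_, rfl⟩
  obtain ⟨c, hcdef⟩ : ∃ y : ℝ, y = θ * (b - x) * (x - a) / (b - a) := ⟨_, rfl⟩
  have hat₁ : a ≤ t₁ := by rw [ht₁def]; nlinarith
  have ht₁x : t₁ ≤ x := by rw [ht₁def]; nlinarith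
  have hxt₂ : x ≤ t₂ := by rw [ht₂def]; nlinarith
  have ht₂b : t₂ ≤ b := by rw [ht₂def]; nlinarith
  obtain ⟨α₁, hα₁def⟩ : ∃ y : ℝ, y = c + (b - x) * a / (b - a) := ⟨_, rfl⟩
  obtain ⟨β₁, hβ₁def⟩ : ∃ y : ℝ, y = -((b - x) / (b - a)) := ⟨_, rfl⟩
  obtain ⟨α₂, hα₂def⟩ : ∃ y : ℝ, y = c - (x - a) * b / (b - a) := ⟨_, rfl⟩
  obtain ⟨β₂, hβ₂def⟩ : ∃ y : ℝ, y = (x - a) / (b - a) := ⟨_, rfl⟩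
  -- the integral identity
  have hI1 := ftc α₁ β₁ a x le_rfl hax hxb
  have hI2 := ftc α₂ β₂ x b hax hxb le_rfl
  have e1 : α₁ + β₁ * x = α₂ + β₂ * x := by
    rw [hα₁def, hβ₁def, hα₂def, hβ₂def]; field_simp; ring
  have e2 : α₁ + β₁ * a = c := by
    rw [hα₁def, hβ₁def]; field_simp; try ring
  have e3 : α₂ + β₂ * b = c := by
    rw [hα₂def, hβ₂def]; field_simp; try ring
  have e4 : β₂ - β₁ = 1 := by
    rw [hβ₁def, hβ₂def]; field_simp; try ring
  have hiden : g x = (∫ t in a..x, (α₁ + β₁ * t) * (f'' t - c₀))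
      + ∫ t in x..b, (α₂ + β₂ * t) * (f'' t - c₀) := by
    rw [hI1, hI2, hga, hgb, hg1ab]
    linear_combination (-(g1 x)) * e1 + (g1 a) * e2 - (g1 a) * e3 - (g x) * e4
  -- split the two integrals
  have hsplit1 : (∫ t in a..x, (α₁ + β₁ * t) * (f'' t - c₀))
      = (∫ t in a..t₁, (α₁ + β₁ * t) * (f'' t - c₀))
        + ∫ t in t₁..x, (α₁ + β₁ * t) * (f'' t - c₀) :=
    (intervalIntegral.integral_add_adjacent_intervals
      (integ α₁ β₁ a t₁ le_rfl hat₁ (le_trans ht₁x hxb))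
      (integ α₁ β₁ t₁ x hat₁ ht₁x hxb)).symm
  have hsplit2 : (∫ t in x..b, (α₂ + β₂ * t) * (f'' t - c₀))
      = (∫ t in x..t₂, (α₂ + β₂ * t) * (f'' t - c₀))
        + ∫ t in t₂..b, (α₂ + β₂ * t) * (f'' t - c₀) :=
    (intervalIntegral.integral_add_adjacent_intervals
      (integ α₂ β₂ x t₂ hax hxt₂ ht₂b)
      (integ α₂ β₂ t₂ b (le_trans hax hxt₂) ht₂b le_rfl)).symm
  -- factored kernels
  have k1fac : ∀ t : ℝ, α₁ + β₁ * t = (θ * (x - a) - (t - a)) * (b - x) / (b - a) := by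
    intro t; rw [hα₁def, hβ₁def, hcdef]; field_simp; ring
  have k2fac : ∀ t : ℝ, α₂ + β₂ * t = (θ * (b - x) - (b - t)) * (x - a) / (b - a) := by
    intro t; rw [hα₂def, hβ₂def, hcdef]; field_simp; ring
  -- four bounds
  have hb1 : (∫ t in a..t₁, (α₁ + β₁ * t) * (f'' t - c₀))
      ≤ ν * (α₁ * (t₁ - a) + β₁ * ((t₁ ^ 2 - a ^ 2) / 2)) := by
    rw [← lint ν α₁ β₁ a t₁]
    apply intervalIntegral.integral_mono_on hat₁
      (integ α₁ β₁ a t₁ le_rfl hat₁ (ht₁x.trans hxb))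
      ((continuous_const.mul (continuous_const.add
        (continuous_const.mul continuous_id))).intervalIntegrable _ _)
    intro t ht
    have htab : t ∈ Set.Icc a b := ⟨ht.1, le_trans ht.2 (ht₁x.trans hxb)⟩
    have h1 : f'' t - c₀ ≤ ν := by rw [hνdef]; linarith [hM t htab]
    have h2 : 0 ≤ α₁ + β₁ * t := by
      rw [k1fac t]
      have ht2 : t ≤ a + θ * (x - a) := by rw [← ht₁def]; exact ht.2
      exact div_nonneg (mul_nonneg (by linarith) (by linarith)) hL.le
    calc (α₁ + β₁ * t) * (f'' t - c₀) ≤ (α₁ + β₁ * t) * ν := mul_le_mul_of_nonneg_left h1 h2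
    _ = ν * (α₁ + β₁ * t) := mul_comm _ _
  have hb2 : (∫ t in t₁..x, (α₁ + β₁ * t) * (f'' t - c₀))
      ≤ μ * (α₁ * (x - t₁) + β₁ * ((x ^ 2 - t₁ ^ 2) / 2)) := by
    rw [← lint μ α₁ β₁ t₁ x]
    apply intervalIntegral.integral_mono_on ht₁x
      (integ α₁ β₁ t₁ x hat₁ ht₁x hxb)
      ((continuous_const.mul (continuous_const.add
        (continuous_const.mul continuous_id))).intervalIntegrable _ _)
    intro t ht
    have htab : t ∈ Set.Icc a b := ⟨hat₁.trans ht.1, ht.2.trans hxb⟩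
    have h1 : μ ≤ f'' t - c₀ := by rw [hμdef]; linarith [hm t htab]
    have h2 : α₁ + β₁ * t ≤ 0 := by
      rw [k1fac t]
      have ht2 : a + θ * (x - a) ≤ t := by rw [← ht₁def]; exact ht.1
      exact div_nonpos_of_nonpos_of_nonneg
        (mul_nonpos_of_nonpos_of_nonneg (by linarith) (by linarith)) hL.le
    calc (α₁ + β₁ * t) * (f'' t - c₀) ≤ (α₁ + β₁ * t) * μ := mul_le_mul_of_nonpos_left h1 h2
    _ = μ * (α₁ + β₁ * t) := mul_comm _ _
  have hb3 : (∫ t in x..t₂, (α₂ + β₂ * t) * (f'' t - c₀))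
      ≤ μ * (α₂ * (t₂ - x) + β₂ * ((t₂ ^ 2 - x ^ 2) / 2)) := by
    rw [← lint μ α₂ β₂ x t₂]
    apply intervalIntegral.integral_mono_on hxt₂
      (integ α₂ β₂ x t₂ hax hxt₂ ht₂b)
      ((continuous_const.mul (continuous_const.add
        (continuous_const.mul continuous_id))).intervalIntegrable _ _)
    intro t ht
    have htab : t ∈ Set.Icc a b := ⟨hax.trans ht.1, ht.2.trans ht₂b⟩
    have h1 : μ ≤ f'' t - c₀ := by rw [hμdef]; linarith [hm t htab]
    have h2 : α₂ + β₂ * t ≤ 0 := by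
      rw [k2fac t]
      have ht2 : t ≤ b - θ * (b - x) := by rw [← ht₂def]; exact ht.2
      exact div_nonpos_of_nonpos_of_nonneg
        (mul_nonpos_of_nonpos_of_nonneg (by linarith) (by linarith)) hL.le
    calc (α₂ + β₂ * t) * (f'' t - c₀) ≤ (α₂ + β₂ * t) * μ := mul_le_mul_of_nonpos_left h1 h2
    _ = μ * (α₂ + β₂ * t) := mul_comm _ _
  have hb4 : (∫ t in t₂..b, (α₂ + β₂ * t) * (f'' t - c₀))
      ≤ ν * (α₂ * (b - t₂) + β₂ * ((b ^ 2 - t₂ ^ 2) / 2)) := by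
    rw [← lint ν α₂ β₂ t₂ b]
    apply intervalIntegral.integral_mono_on ht₂b
      (integ α₂ β₂ t₂ b (hax.trans hxt₂) ht₂b le_rfl)
      ((continuous_const.mul (continuous_const.add
        (continuous_const.mul continuous_id))).intervalIntegrable _ _)
    intro t ht
    have htab : t ∈ Set.Icc a b := ⟨hax.trans (hxt₂.trans ht.1), ht.2⟩
    have h1 : f'' t - c₀ ≤ ν := by rw [hνdef]; linarith [hM t htab]
    have h2 : 0 ≤ α₂ + β₂ * t := by
      rw [k2fac t]
      have ht2 : b - θ * (b - x) ≤ t := by rw [← ht₂def]; exact ht.1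
      exact div_nonneg (mul_nonneg (by linarith) (by linarith)) hL.le
    calc (α₂ + β₂ * t) * (f'' t - c₀) ≤ (α₂ + β₂ * t) * ν := mul_le_mul_of_nonneg_left h1 h2
    _ = ν * (α₂ + β₂ * t) := mul_comm _ _
  -- value of the comparison sum
  have hVeq : ν * (α₁ * (t₁ - a) + β₁ * ((t₁ ^ 2 - a ^ 2) / 2))
      + μ * (α₁ * (x - t₁) + β₁ * ((x ^ 2 - t₁ ^ 2) / 2))
      + μ * (α₂ * (t₂ - x) + β₂ * ((t₂ ^ 2 - x ^ 2) / 2))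
      + ν * (α₂ * (b - t₂) + β₂ * ((b ^ 2 - t₂ ^ 2) / 2))
      = (b - x) * (x - a) * (θ ^ 2 * (ν - μ) / 2 + μ * θ - μ / 2) := by
    rw [hα₁def, hβ₁def, hα₂def, hβ₂def, hcdef, ht₁def, ht₂def]
    field_simp
    ring
  have hbr : θ ^ 2 * (ν - μ) / 2 + μ * θ - μ / 2 ≤ D / 8 := by
    have hμeq : μ = -(θ * D) := by linarith [hθD]
    have hνeq : ν = D + μ := by rw [hDνμ]; ring
    have hkey : θ ^ 2 * (ν - μ) / 2 + μ * θ - μ / 2 = D / 8 - D * (1 - 2 * θ) ^ 2 / 8 := by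
      rw [hνeq, hμeq]; ring
    have hpos : 0 ≤ D * (1 - 2 * θ) ^ 2 := mul_nonneg hD (sq_nonneg _)
    linarith
  have hfac : 0 ≤ (b - x) * (x - a) := mul_nonneg (by linarith) (by linarith)
  have hfin : (b - x) * (x - a) * (θ ^ 2 * (ν - μ) / 2 + μ * θ - μ / 2)
      ≤ (b - x) * (x - a) * (M₂ - m₂) / 8 := by
    have := mul_le_mul_of_nonneg_left hbr hfac
    rw [hDdef] at this
    linarith [this]
  -- assemble
  have hgoal_eq : f x - ((f a * (x - b) / (a - b) + f b * (x - a) / (b - a))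
        - ((f' b - f' a) / (2 * (b - a))) * (b - x) * (x - a)) = g x := by
    simp only [hgdef, hc₀]
    field_simp
    ring
  rw [hgoal_eq, hiden, hsplit1, hsplit2]
  calc (∫ t in a..t₁, (α₁ + β₁ * t) * (f'' t - c₀))
        + (∫ t in t₁..x, (α₁ + β₁ * t) * (f'' t - c₀))
        + ((∫ t in x..t₂, (α₂ + β₂ * t) * (f'' t - c₀))
        + ∫ t in t₂..b, (α₂ + β₂ * t) * (f'' t - c₀))
      ≤ ν * (α₁ * (t₁ - a) + β₁ * ((t₁ ^ 2 - a ^ 2) / 2))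
        + μ * (α₁ * (x - t₁) + β₁ * ((x ^ 2 - t₁ ^ 2) / 2))
        + (μ * (α₂ * (t₂ - x) + β₂ * ((t₂ ^ 2 - x ^ 2) / 2))
        + ν * (α₂ * (b - t₂) + β₂ * ((b ^ 2 - t₂ ^ 2) / 2))) :=
      add_le_add (add_le_add hb1 hb2) (add_le_add hb3 hb4)
  _ = (b - x) * (x - a) * (θ ^ 2 * (ν - μ) / 2 + μ * θ - μ / 2) := by
      rw [← hVeq]; ring
  _ ≤ (b - x) * (x - a) * (M₂ - m₂) / 8 := hfin

set_option maxHeartbeats 1000000 in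
theorem corrected_interpolation_pointwise_bound
    (a b m₂ M₂ : ℝ) (f f' f'' : ℝ → ℝ) (hab : a < b)
    (hf' : ∀ x ∈ Set.Icc a b, HasDerivWithinAt f (f' x) (Set.Icc a b) x)
    (hf'' : ∀ x ∈ Set.Icc a b, HasDerivWithinAt f' (f'' x) (Set.Icc a b) x)
    (hcont : ContinuousOn f'' (Set.Icc a b))
    (hm : ∀ x ∈ Set.Icc a b, m₂ ≤ f'' x)
    (hM : ∀ x ∈ Set.Icc a b, f'' x ≤ M₂)
    (x : ℝ) (hx : x ∈ Set.Icc a b) :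
    ((b - a) * (m₂ - M₂) / 32) * (4 * (b - x) * (x - a) / (b - a))
        ≤ f x - ((f a * (x - b) / (a - b) + f b * (x - a) / (b - a))
            - ((f' b - f' a) / (2 * (b - a))) * (b - x) * (x - a))
    ∧ f x - ((f a * (x - b) / (a - b) + f b * (x - a) / (b - a))
            - ((f' b - f' a) / (2 * (b - a))) * (b - x) * (x - a))
        ≤ ((b - a) * (M₂ - m₂) / 32) * (4 * (b - x) * (x - a) / (b - a))
    ∧ |f x - ((f a * (x - b) / (a - b) + f b * (x - a) / (b - a))
            - ((f' b - f' a) / (2 * (b - a))) * (b - x) * (x - a))|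
        ≤ (b - x) * (x - a) * (M₂ - m₂) / 8 := by
  have hL : (0:ℝ) < b - a := by linarith
  have hL' : b - a ≠ 0 := ne_of_gt hL
  have hub := key_upper a b m₂ M₂ f f' f'' hab hf' hf'' hcont hm hM x hx
  have hlb' := key_upper a b (-M₂) (-m₂) (fun t => -f t) (fun t => -f' t) (fun t => -f'' t) hab
      (fun t ht => (hf' t ht).neg) (fun t ht => (hf'' t ht).neg) hcont.neg
      (fun t ht => neg_le_neg (hM t ht)) (fun t ht => neg_le_neg (hm t ht)) x hx
  have hrw : (-f x) - (((-f a) * (x - b) / (a - b) + (-f b) * (x - a) / (b - a))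
        - ((-f' b - -f' a) / (2 * (b - a))) * (b - x) * (x - a))
      = -(f x - ((f a * (x - b) / (a - b) + f b * (x - a) / (b - a))
        - ((f' b - f' a) / (2 * (b - a))) * (b - x) * (x - a))) := by ring
  rw [hrw] at hlb'
  have hrw2 : (b - x) * (x - a) * (-m₂ - -M₂) / 8 = (b - x) * (x - a) * (M₂ - m₂) / 8 := by ring
  rw [hrw2] at hlb'
  have e1 : ((b - a) * (m₂ - M₂) / 32) * (4 * (b - x) * (x - a) / (b - a))
      = -((b - x) * (x - a) * (M₂ - m₂) / 8) := by field_simp; ring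
  have e2 : ((b - a) * (M₂ - m₂) / 32) * (4 * (b - x) * (x - a) / (b - a))
      = (b - x) * (x - a) * (M₂ - m₂) / 8 := by field_simp; ring
  refine ⟨by linarith, by linarith, abs_le.mpr ⟨by linarith, by linarith⟩⟩
end
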